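/- arXiv:2512.00372 — 2 statements merged into one kernel-verified Lean document; each statement's English description precedes it below -/
import Mathlib

section
/- If H ∈ K_n, x ∈ H, and γ ∈ Sym(I^n) satisfies γ(x) ∈ H, then γ(x) = x. -/
open Set Function

noncomputable section

abbrev E (n : ℕ) := EuclideanSpace ℝ (Fin n)

/-- `I^d × {0}^{n-d}` inside `ℝ^n`. -/
def IcubeD (n d : ℕ) : Set (E n) :=
  {x | (∀ i : Fin n, (i : ℕ) < d → x i ∈ Icc (-1 : ℝ) 1) ∧
       ∀ i : Fin n, d ≤ (i : ℕ) → x i = 0}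

/-- The cube `I^n = [-1,1]^n`. -/
def Icube (n : ℕ) : Set (E n) := IcubeD n n

/-- `H^d_{ij}(a,b) = {x ∈ I^d × {0}^{n-d} : a·x_i ≥ b·x_j}`. -/
def HsetD (n d : ℕ) (i j : Fin n) (a b : ℝ) : Set (E n) :=
  {x ∈ IcubeD n d | b * x j ≤ a * x i}

def Hset (n : ℕ) (i j : Fin n) (a b : ℝ) : Set (E n) := HsetD n n i j a b

/-- The family `ℋ^d` of the sets `H^d_{ij}(a,b)`, `a, b ∈ {-1,1}`. -/
def HfamD (n d : ℕ) : Set (Set (E n)) :=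
  {H | ∃ i j : Fin n, (i : ℕ) < d ∧ (j : ℕ) < d ∧
      ∃ a b : ℝ, (a = 1 ∨ a = -1) ∧ (b = 1 ∨ b = -1) ∧ H = HsetD n d i j a b}

def Hfam (n : ℕ) : Set (Set (E n)) := HfamD n n

/-- Fundamental subsets of `ℋ^d`. -/
def IsFundSubsetD (n d : ℕ) (S : Set (Set (E n))) : Prop :=
  S ⊆ HfamD n d ∧
  ∀ i j : Fin n, (i : ℕ) < d → (j : ℕ) < d → i ≤ j →
    (HsetD n d i j 1 (-1) ∈ S ∨ HsetD n d i j (-1) 1 ∈ S) ∧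
    (HsetD n d i j 1 1 ∈ S ∨ HsetD n d i j (-1) (-1) ∈ S)

def IsFundSubset (n : ℕ) (S : Set (Set (E n))) : Prop := IsFundSubsetD n n S

/-- `K°_d` (realized inside `ℝ^n` on the slice `I^d × {0}^{n-d}`). -/
def KoD (n d : ℕ) : Set (Set (E n)) :=
  {K | ∃ S, IsFundSubsetD n d S ∧ K = ⋂₀ S}

/-- `K°_n`. -/
def Ko (n : ℕ) : Set (Set (E n)) := KoD n n

/-- Symmetries of the cube `I^n`. -/
def SymI (n : ℕ) (γ : E n → E n) : Prop :=
  Isometry γ ∧ Surjective γ ∧ γ '' Icube n = Icube n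

/-- Conformal affine maps `x ↦ λ U x + v`, `λ > 0`, `U ∈ O(n)`. -/
def ConfAffine (n : ℕ) (L : E n → E n) : Prop :=
  ∃ (c : ℝ) (U : E n ≃ₗᵢ[ℝ] E n) (v : E n), 0 < c ∧ ∀ x, L x = c • U x + v

/-- `d`-dimensional cubes in `ℝ^n` (for `d ≥ 1`). -/
def IsCube (n d : ℕ) (C : Set (E n)) : Prop :=
  ∃ L : E n → E n, ConfAffine n L ∧ L '' C = IcubeD n d

/-- `K°_d(C)` for a `d`-dimensional cube `C` (with `K°_0(C) = {C}`). -/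
def KoCube (n d : ℕ) (C : Set (E n)) : Set (Set (E n)) :=
  {K | (d = 0 ∧ K = C) ∨
       (1 ≤ d ∧ ∃ L : E n → E n, ConfAffine n L ∧ L '' C = IcubeD n d ∧
          ∃ H ∈ KoD n d, K = L ⁻¹' H)}

/-- Faces of `I^d × {0}^{n-d}` of dimension `e`. -/
def IsFaceD (n d : ℕ) (f : Set (E n)) (e : ℕ) : Prop :=
  ∃ J : Fin n → Set ℝ,
    (∀ i : Fin n, (i : ℕ) < d → (J i = Icc (-1 : ℝ) 1 ∨ J i = {-1} ∨ J i = {1})) ∧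
    (∀ i : Fin n, d ≤ (i : ℕ) → J i = {0}) ∧
    {i : Fin n | J i = Icc (-1 : ℝ) 1}.ncard = e ∧
    f = {x : E n | ∀ i, x i ∈ J i}

/-- `c` is a face of dimension `e` of the `d`-dimensional cube `C`. -/
def FaceOfCubeDim (n d : ℕ) (C c : Set (E n)) (e : ℕ) : Prop :=
  ∃ L : E n → E n, ConfAffine n L ∧ L '' C = IcubeD n d ∧
    ∃ f, IsFaceD n d f e ∧ c = L ⁻¹' f

/-- The symmetric decomposition `K_d(C)` of a `d`-dimensional cube `C`. -/
def KcalCube (n d : ℕ) (C : Set (E n)) : Set (Set (E n)) :=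
  {K | ∃ c e, FaceOfCubeDim n d C c e ∧ K ∈ KoCube n e c}

/-- `∂K_d(C)`: union of the `K°` of the proper faces of `C`. -/
def KcalBdCube (n d : ℕ) (C : Set (E n)) : Set (Set (E n)) :=
  {K | ∃ c e, FaceOfCubeDim n d C c e ∧ e < d ∧ K ∈ KoCube n e c}

/-- The symmetric decomposition `K_n` of `I^n`. -/
def Kcal (n : ℕ) : Set (Set (E n)) :=
  {K | ∃ c e, IsFaceD n n c e ∧ K ∈ KoCube n e c}

/-- `∂K_n`: union of the `K°` of the proper faces of `I^n`. -/
def KcalBdI (n : ℕ) : Set (Set (E n)) :=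
  {K | ∃ c e, IsFaceD n n c e ∧ e < n ∧ K ∈ KoCube n e c}

/-- `∂_∘ C`: the union of the proper faces of the `d`-cube `C`. -/
def cellBd (n d : ℕ) (C : Set (E n)) : Set (E n) :=
  ⋃₀ {c | ∃ e, e < d ∧ FaceOfCubeDim n d C c e}

/-- The cone `Cone(x, Y) = {x + t (y - x) : y ∈ Y, t ∈ [0,1]}`. -/
def Cone (n : ℕ) (x : E n) (Y : Set (E n)) : Set (E n) :=
  {z | ∃ y ∈ Y, ∃ t : ℝ, t ∈ Icc (0 : ℝ) 1 ∧ z = x + t • (y - x)}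

/-- Standard orthotopes `∏ [-a_i, a_i]`. -/
def StdOrtho (n : ℕ) (a : Fin n → ℝ) : Set (E n) :=
  {x | ∀ i, x i ∈ Icc (-(a i)) (a i)}

/-- `n`-dimensional orthotopes in `ℝ^n`. -/
def IsOrtho (n : ℕ) (R : Set (E n)) : Prop :=
  ∃ (L : E n → E n) (a : Fin n → ℝ), Isometry L ∧ Surjective L ∧
    (∀ i, 0 < a i) ∧ L '' R = StdOrtho n a

/-- The cubic-stretching of the standard orthotope `∏ [-a_i, a_i]`. -/
def stretch (n : ℕ) (a : Fin n → ℝ) : E n → E n :=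
  fun x => WithLp.toLp 2 (fun i => x i / a i)

/-- `K_n(R)` for an `n`-dimensional orthotope `R`. -/
def KcalOrtho (n : ℕ) (R : Set (E n)) : Set (Set (E n)) :=
  {K | ∃ (L : E n → E n) (a : Fin n → ℝ), Isometry L ∧ Surjective L ∧
      (∀ i, 0 < a i) ∧ L '' R = StdOrtho n a ∧
      ∃ H ∈ Kcal n, K = L ⁻¹' (stretch n a ⁻¹' H)}

/-- Faces of an `n`-dimensional orthotope `R`. -/
def FaceOfOrtho (n : ℕ) (R c : Set (E n)) : Prop :=
  ∃ (L : E n → E n) (a : Fin n → ℝ), Isometry L ∧ Surjective L ∧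
    (∀ i, 0 < a i) ∧ L '' R = StdOrtho n a ∧
    ∃ f e, IsFaceD n n f e ∧ c = L ⁻¹' (stretch n a ⁻¹' f)

/-- The center `x_α` of the subcube `C_α`. -/
def xalpha (n l : ℕ) (α : Fin n → ℕ) : E n :=
  WithLp.toLp 2 (fun i => (2 * (α i : ℝ) + 1 - (l : ℝ)) / (l : ℝ))

/-- `T_α(x) = l (x - x_α)`, mapping `C_α` onto `I^n`. -/
def Talpha (n l : ℕ) (α : Fin n → ℕ) : E n → E n :=
  fun x => (l : ℝ) • (x - xalpha n l α)

/-- The refined symmetric decomposition `K_{n,l}`. -/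
def Knl (n l : ℕ) : Set (Set (E n)) :=
  {K | ∃ α : Fin n → ℕ, (∀ i, α i < l) ∧ ∃ H ∈ Kcal n, K = Talpha n l α ⁻¹' H}

/-- `Γ` is a group of surjective isometries of `ℝ^n`. -/
def IsIsomGroup (n : ℕ) (Γ : Set (E n → E n)) : Prop :=
  (∀ γ ∈ Γ, Isometry γ ∧ Surjective γ) ∧ id ∈ Γ ∧
  (∀ γ ∈ Γ, ∀ γ' ∈ Γ, γ ∘ γ' ∈ Γ) ∧
  ∀ γ ∈ Γ, ∃ γ' ∈ Γ, γ ∘ γ' = id ∧ γ' ∘ γ = id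

/-- `D` is a fundamental domain of `Γ`. -/
def IsFundDom (n : ℕ) (Γ : Set (E n → E n)) (D : Set (E n)) : Prop :=
  (∃ U : Set (E n), U.Nonempty ∧ IsOpen U ∧ IsConnected U ∧ D = closure U) ∧
  (⋃ γ ∈ Γ, γ '' D) = univ ∧
  (∀ x : E n, ∃ V : Set (E n), x ∈ V ∧ IsOpen V ∧
    {γ ∈ Γ | ((γ '' D) ∩ V).Nonempty}.Finite) ∧
  ∀ γ ∈ Γ, γ ≠ id → interior D ∩ interior (γ '' D) = ∅



lemma aux_abs_le {a b : ℝ} (h1 : -b ≤ a) (h2 : b ≤ a) : |b| ≤ |a| := by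
  have ha : 0 ≤ a := by rcases le_or_gt 0 b with h | h <;> linarith
  rw [abs_of_nonneg ha, abs_le]; constructor <;> linarith

lemma aux_eq_of_abs {a b η : ℝ} (hη : η ≠ 0) (habs : |a| = |b|)
    (hsgn : (0 ≤ η * a ∧ 0 ≤ η * b) ∨ (η * a ≤ 0 ∧ η * b ≤ 0)) : a = b := by
  have h1 : |η * a| = |η * b| := by rw [abs_mul, abs_mul, habs]
  have : η * a = η * b := by
    rcases hsgn with ⟨h2, h3⟩ | ⟨h2, h3⟩
    · rwa [abs_of_nonneg h2, abs_of_nonneg h3] at h1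
    · have := h1; rw [abs_of_nonpos h2, abs_of_nonpos h3] at this; linarith
  exact mul_left_cancel₀ hη this

lemma aux_sum_eq_card {ι : Type*} (s : Finset ι) (f : ι → ℝ) (h : ∀ i ∈ s, f i ≤ 1)
    (h2 : ∑ i ∈ s, f i = s.card) : ∀ i ∈ s, f i = 1 := by
  have key : ∑ i ∈ s, (1 - f i) = 0 := by
    rw [Finset.sum_sub_distrib, Finset.sum_const, h2]; simp
  have h3 := (Finset.sum_eq_zero_iff_of_nonneg (fun i hi => by linarith [h i hi])).1 key
  intro i hi; have := h3 i hi; linarith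

lemma aux_lemV {n : ℕ} (g : Fin n → ℝ) (h1 : ∀ k, g k = 1 ∨ g k = 0 ∨ g k = -1)
    (h2 : ∑ k, g k ^ 2 = 1) : ∃ k, (g k = 1 ∨ g k = -1) ∧ ∀ l, l ≠ k → g l = 0 := by
  have hex : ∃ k, g k ≠ 0 := by
    by_contra h; push_neg at h
    rw [Finset.sum_eq_zero (fun k _ => by rw [h k]; ring)] at h2; norm_num at h2
  obtain ⟨k, hk⟩ := hex
  have hk1 : g k = 1 ∨ g k = -1 := by rcases h1 k with h | h | h <;> tauto
  refine ⟨k, hk1, fun l hl => ?_⟩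
  by_contra hl0
  have hl1 : g l ^ 2 = 1 := by rcases h1 l with h | h | h <;> simp [h] at hl0 ⊢
  have hk2 : g k ^ 2 = 1 := by rcases hk1 with h | h <;> simp [h]
  have hsub : ({k, l} : Finset (Fin n)) ⊆ Finset.univ := Finset.subset_univ _
  have hle : ∑ j ∈ ({k, l} : Finset (Fin n)), g j ^ 2 ≤ ∑ j, g j ^ 2 :=
    Finset.sum_le_sum_of_subset_of_nonneg hsub (fun j _ _ => sq_nonneg _)
  rw [Finset.sum_pair (Ne.symm hl), hk2, hl1, h2] at hle; linarith

lemma aux_tourn {ι : Type*} [DecidableEq ι] (u v : ι → ℝ) :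
    ∀ s : Finset ι, (∀ i ∈ s, ∀ j ∈ s, (u i ≤ u j ∧ v i ≤ v j) ∨ (u j ≤ u i ∧ v j ≤ v i)) →
    s.val.map u = s.val.map v → ∀ i ∈ s, u i = v i := by
  intro s
  induction s using Finset.strongInduction with
  | _ s ih =>
    intro hmono hms i hi
    have hne : s.Nonempty := ⟨i, hi⟩
    obtain ⟨i₁, hi₁, hmax1⟩ := s.exists_max_image u hne
    classical
    obtain ⟨i₀, hi₀T, hmax0⟩ := (s.filter (fun j => u i₁ ≤ u j)).exists_max_image v
      ⟨i₁, Finset.mem_filter.2 ⟨hi₁, le_refl _⟩⟩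
    obtain ⟨hi₀s, hi₀u⟩ := Finset.mem_filter.1 hi₀T
    have hu0 : ∀ j ∈ s, u j ≤ u i₀ := fun j hj => le_trans (hmax1 j hj) hi₀u
    have hv0 : ∀ j ∈ s, v j ≤ v i₀ := by
      intro j hj
      rcases hmono j hj i₀ hi₀s with ⟨_, h2⟩ | ⟨h1, _⟩
      · exact h2
      · exact hmax0 j (Finset.mem_filter.2 ⟨hj, le_trans hi₀u h1⟩)
    have h1 : u i₀ ∈ s.val.map v := by
      rw [← hms]; exact Multiset.mem_map_of_mem u hi₀s
    obtain ⟨j, hjs, hjv⟩ := Multiset.mem_map.1 h1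
    have h2 : v i₀ ∈ s.val.map u := by
      rw [hms]; exact Multiset.mem_map_of_mem v hi₀s
    obtain ⟨j', hj's, hj'u⟩ := Multiset.mem_map.1 h2
    have heq : u i₀ = v i₀ :=
      le_antisymm (by rw [← hjv]; exact hv0 j (Finset.mem_val.mp hjs))
        (by rw [← hj'u]; exact hu0 j' (Finset.mem_val.mp hj's))
    by_cases hii : i = i₀
    · rw [hii]; exact heq
    · have hcons : s.val = i₀ ::ₘ (s.erase i₀).val := by
        rw [Finset.erase_val]; exact (Multiset.cons_erase (Finset.mem_val.mpr hi₀s)).symm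
      have hms' : (s.erase i₀).val.map u = (s.erase i₀).val.map v := by
        have := hms; rw [hcons, Multiset.map_cons, Multiset.map_cons, heq] at this
        exact (Multiset.cons_inj_right _).1 this
      exact ih (s.erase i₀) (Finset.erase_ssubset hi₀s)
        (fun a ha b hb => hmono a (Finset.mem_of_mem_erase ha) b (Finset.mem_of_mem_erase hb))
        hms' i (Finset.mem_erase.2 ⟨hii, hi⟩)

lemma aux_map_perm {ι : Type*} [Fintype ι] [DecidableEq ι] (σ : Equiv.Perm ι) (f : ι → ℝ) :
    Finset.univ.val.map (f ∘ σ) = Finset.univ.val.map f := by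
  rw [← Multiset.map_map]
  congr 1
  have : Finset.univ.val.map σ = (Finset.univ.map σ.toEmbedding).val := by
    simp [Finset.map_val]
  rw [this, Finset.map_univ_equiv]

lemma norm_sq_eq {n : ℕ} (z : E n) : ‖z‖ ^ 2 = ∑ k, z k ^ 2 := by
  rw [EuclideanSpace.norm_eq, Real.sq_sqrt (by positivity)]
  simp [Real.norm_eq_abs, sq_abs]

lemma card_filter_lt {n : ℕ} (e : ℕ) (hen : e ≤ n) :
    (Finset.univ.filter (fun k : Fin n => (k : ℕ) < e)).card = e := by
  have h : (Finset.univ.filter (fun k : Fin n => (k : ℕ) < e))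
      = Finset.univ.map (Fin.castLEEmb hen) := by
    ext k
    simp only [Finset.mem_filter, Finset.mem_univ, true_and, Finset.mem_map]
    constructor
    · intro hk
      exact ⟨⟨(k : ℕ), hk⟩, by apply Fin.val_injective; rfl⟩
    · rintro ⟨j, -, rfl⟩
      simpa using j.isLt
  rw [h, Finset.card_map, Finset.card_univ, Fintype.card_fin]

lemma piLp_sum_apply {n : ℕ} {ι : Type*} (s : Finset ι) (f : ι → E n) (k : Fin n) :
    (∑ i ∈ s, f i) k = ∑ i ∈ s, f i k := by
  classical
  induction s using Finset.cons_induction with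
  | empty => rfl
  | cons a s ha ih => rw [Finset.sum_cons, Finset.sum_cons, PiLp.add_apply, ih]

set_option maxHeartbeats 2000000 in
lemma face_map (n e : ℕ) (he : 1 ≤ e) (F : Finset (Fin n)) (hFe : F.card = e)
    (m : E n) (hm : ∀ i ∈ F, m i = 0)
    (C : Set (E n))
    (hC : C = {x : E n | (∀ i ∈ F, x i ∈ Icc (-1:ℝ) 1) ∧ ∀ i ∉ F, x i = m i})
    (L : E n → E n) (hL : ConfAffine n L) (hLC : L '' C = IcubeD n e) :
    ∃ (ρ : Fin n → Fin n) (η : Fin n → ℝ),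
      (∀ i ∈ F, (ρ i : ℕ) < e) ∧ (∀ i ∈ F, ∀ j ∈ F, ρ i = ρ j → i = j) ∧
      (∀ i ∈ F, η i = 1 ∨ η i = -1) ∧
      ∀ x ∈ C, ∀ i ∈ F, L x (ρ i) = η i * x i := by
  classical
  obtain ⟨μ, U, v, hμ, hLdef⟩ := hL
  have hen : e ≤ n := by
    rw [← hFe]; simpa using F.card_le_univ
  have hmC : m ∈ C := by
    rw [hC]; exact ⟨fun i hi => by rw [hm i hi]; norm_num, fun i hi => rfl⟩
  have hLsub : ∀ x y : E n, L x - L y = μ • U (x - y) := by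
    intro x y
    rw [hLdef, hLdef, map_sub, smul_sub]
    abel
  have hLnormsq : ∀ x y : E n, ‖L x - L y‖ ^ 2 = μ ^ 2 * ‖x - y‖ ^ 2 := by
    intro x y
    rw [hLsub, norm_smul, U.norm_map, Real.norm_of_nonneg hμ.le]
    ring
  -- center maps to 0
  have hQsym : ∀ z ∈ IcubeD n e, (2 : ℝ) • L m - z ∈ IcubeD n e := by
    intro z hz
    rw [← hLC] at hz
    obtain ⟨x, hxC, rfl⟩ := hz
    have hxC' : (2 : ℝ) • m - x ∈ C := by
      rw [hC] at hxC ⊢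
      refine ⟨fun i hi => ?_, fun i hi => ?_⟩
      · have h1 := hxC.1 i hi
        rw [PiLp.sub_apply, PiLp.smul_apply, hm i hi]
        simp only [smul_eq_mul, mul_zero, zero_sub, Set.mem_Icc] at h1 ⊢
        constructor <;> linarith [h1.1, h1.2]
      · have h1 := hxC.2 i hi
        rw [PiLp.sub_apply, PiLp.smul_apply, h1, smul_eq_mul]
        ring
    have key : L ((2 : ℝ) • m - x) = (2 : ℝ) • L m - L x := by
      have h1 := hLsub ((2 : ℝ) • m - x) m
      have h2 := hLsub x m
      have h3 : (2 : ℝ) • m - x - m = -(x - m) := by module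
      rw [h3, map_neg, smul_neg, ← h2] at h1
      have h4 := sub_eq_iff_eq_add.mp h1
      rw [h4]; module
    rw [← key]
    rw [← hLC]
    exact ⟨_, hxC', rfl⟩
  have hz1 : WithLp.toLp 2 (fun k : Fin n => if (k : ℕ) < e then (1 : ℝ) else 0) ∈ IcubeD n e := by
    constructor
    · intro i hi; simp only [WithLp.ofLp_toLp, hi, if_true]; norm_num
    · intro i hi; simp only [WithLp.ofLp_toLp, Nat.not_lt.2 hi, if_false]
  have hz2 : WithLp.toLp 2 (fun k : Fin n => if (k : ℕ) < e then (-1 : ℝ) else 0) ∈ IcubeD n e := by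
    constructor
    · intro i hi; simp only [WithLp.ofLp_toLp, hi, if_true]; norm_num
    · intro i hi; simp only [WithLp.ofLp_toLp, Nat.not_lt.2 hi, if_false]
  have hLm : L m = 0 := by
    apply PiLp.ext; intro k
    have h1 := (hQsym _ hz1)
    have h2 := (hQsym _ hz2)
    by_cases hk : (k : ℕ) < e
    · have e1 := h1.1 k hk
      have e2 := h2.1 k hk
      rw [PiLp.sub_apply, PiLp.smul_apply] at e1 e2
      simp only [WithLp.ofLp_toLp, hk, if_true, Set.mem_Icc, smul_eq_mul] at e1 e2
      have : L m k = 0 := by linarith [e1.1, e1.2, e2.1, e2.2]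
      simpa using this
    · have e1 := h1.2 k (Nat.not_lt.1 hk)
      rw [PiLp.sub_apply, PiLp.smul_apply] at e1
      simp only [WithLp.ofLp_toLp, Nat.not_lt.2 (Nat.not_lt.1 hk), if_false, smul_eq_mul, sub_zero] at e1
      have : L m k = 0 := by linarith
      simpa using this
  have hLnorm0 : ∀ x : E n, ‖L x‖ ^ 2 = μ ^ 2 * ‖x - m‖ ^ 2 := by
    intro x
    have := hLnormsq x m
    rwa [hLm, sub_zero] at this
  -- norms of points of C relative to m
  have hCnorm : ∀ x ∈ C, ‖x - m‖ ^ 2 = ∑ i ∈ F, (x i) ^ 2 := by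
    intro x hxC
    rw [hC] at hxC
    rw [norm_sq_eq]
    rw [← Finset.sum_filter_add_sum_filter_not Finset.univ (· ∈ F)]
    have hx1 : ∀ i ∈ Finset.univ.filter (· ∈ F), ((x - m) i) ^ 2 = x i ^ 2 := by
      intro i hi
      have hiF : i ∈ F := (Finset.mem_filter.1 hi).2
      rw [PiLp.sub_apply, hm i hiF, sub_zero]
    have hx2 : ∀ i ∈ Finset.univ.filter (¬ · ∈ F), ((x - m) i) ^ 2 = 0 := by
      intro i hi
      have hiF := (Finset.mem_filter.1 hi).2
      rw [PiLp.sub_apply, hxC.2 i hiF, sub_self]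
      norm_num
    rw [Finset.sum_congr rfl hx1, Finset.sum_congr rfl hx2, Finset.sum_const_zero, add_zero]
    congr 1
    ext i
    simp
  -- bound for points of C
  have hCle : ∀ x ∈ C, ‖x - m‖ ^ 2 ≤ (e : ℝ) := by
    intro x hxC
    rw [hCnorm x hxC]
    have : ∀ i ∈ F, (x i) ^ 2 ≤ 1 := by
      intro i hi
      rw [hC] at hxC
      have := hxC.1 i hi
      simp only [Set.mem_Icc] at this
      nlinarith [this.1, this.2]
    calc ∑ i ∈ F, (x i) ^ 2 ≤ ∑ i ∈ F, (1:ℝ) := Finset.sum_le_sum this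
    _ = (e : ℝ) := by rw [Finset.sum_const, hFe]; simp
  -- bound for points of Q
  have hQle : ∀ z ∈ IcubeD n e, ‖z‖ ^ 2 ≤ (e : ℝ) := by
    intro z hz
    rw [norm_sq_eq]
    calc ∑ k, (z k) ^ 2 ≤ ∑ k : Fin n, (if (k : ℕ) < e then (1:ℝ) else 0) := by
          apply Finset.sum_le_sum
          intro k _
          by_cases hk : (k : ℕ) < e
          · have := hz.1 k hk
            simp only [Set.mem_Icc] at this
            simp only [hk, if_true]
            nlinarith [this.1, this.2]
          · rw [hz.2 k (Nat.not_lt.1 hk)]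
            simp [hk]
    _ = (e : ℝ) := by
          rw [Finset.sum_boole, card_filter_lt e hen]
  -- vertex xstar
  obtain ⟨xstar, hxstarv⟩ : ∃ xs : E n, ∀ i : Fin n, xs i = if i ∈ F then (1:ℝ) else m i :=
    ⟨WithLp.toLp 2 (fun i => if i ∈ F then (1:ℝ) else m i), fun _ => rfl⟩
  have hxstarC : xstar ∈ C := by
    rw [hC]
    constructor
    · intro i hi; rw [hxstarv i, if_pos hi]; norm_num
    · intro i hi; rw [hxstarv i, if_neg hi]
  have hxstarnorm : ‖xstar - m‖ ^ 2 = (e : ℝ) := by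
    rw [hCnorm xstar hxstarC]
    have : ∀ i ∈ F, (xstar i) ^ 2 = 1 := by
      intro i hi; rw [hxstarv i, if_pos hi]; norm_num
    rw [Finset.sum_congr rfl this, Finset.sum_const, hFe]; simp
  have he1 : (1 : ℝ) ≤ (e : ℝ) := by exact_mod_cast he
  -- mu = 1
  have hμ1 : μ = 1 := by
    have h1 : μ ^ 2 * (e : ℝ) ≤ (e : ℝ) := by
      have hq : L xstar ∈ IcubeD n e := by rw [← hLC]; exact ⟨_, hxstarC, rfl⟩
      have := hQle _ hq
      rw [hLnorm0, hxstarnorm] at this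
      exact this
    have h2 : (e : ℝ) ≤ μ ^ 2 * (e : ℝ) := by
      have hz1' := hz1
      rw [← hLC] at hz1'
      obtain ⟨x₀, hx₀C, hx₀⟩ := hz1'
      have hn1 : ‖L x₀‖ ^ 2 = (e : ℝ) := by
        rw [hx₀, norm_sq_eq]
        have : ∀ k : Fin n, ((fun k : Fin n => if (k : ℕ) < e then (1:ℝ) else 0) k) ^ 2
            = (if (k : ℕ) < e then (1:ℝ) else 0) := by
          intro k; by_cases hk : (k : ℕ) < e <;> simp [hk]
        rw [Finset.sum_congr rfl (fun k _ => this k), Finset.sum_boole, card_filter_lt e hen]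
      rw [hLnorm0] at hn1
      have := hCle x₀ hx₀C
      nlinarith
    have hsq : μ ^ 2 = 1 := by nlinarith
    nlinarith [sq_nonneg (μ - 1)]
  subst hμ1
  simp only [one_smul] at hLsub hLdef
  -- vertices map to vertices
  have hvert : ∀ w ∈ C, (∀ i ∈ F, w i = 1 ∨ w i = -1) →
      ∀ k : Fin n, ((k : ℕ) < e → ((L w) k = 1 ∨ (L w) k = -1)) ∧ (e ≤ (k : ℕ) → (L w) k = 0) := by
    intro w hwC hwv
    have hq : L w ∈ IcubeD n e := by rw [← hLC]; exact ⟨_, hwC, rfl⟩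
    have hnorm : ∑ k, ((L w) k) ^ 2 = (e : ℝ) := by
      rw [← norm_sq_eq, hLnorm0, one_pow, one_mul, hCnorm w hwC]
      have : ∀ i ∈ F, (w i) ^ 2 = 1 := by
        intro i hi; rcases hwv i hi with h | h <;> rw [h] <;> norm_num
      rw [Finset.sum_congr rfl this, Finset.sum_const, hFe]; simp
    have hfilter : ∑ k ∈ Finset.univ.filter (fun k : Fin n => (k : ℕ) < e), ((L w) k) ^ 2
        = (e : ℝ) := by
      rw [← hnorm, ← Finset.sum_filter_add_sum_filter_not Finset.univ (fun k : Fin n => (k : ℕ) < e)]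
      have : ∀ k ∈ Finset.univ.filter (fun k : Fin n => ¬ (k : ℕ) < e), ((L w) k) ^ 2 = 0 := by
        intro k hk
        have := (Finset.mem_filter.1 hk).2
        rw [hq.2 k (Nat.not_lt.1 this)]
        norm_num
      rw [Finset.sum_congr rfl this, Finset.sum_const_zero, add_zero]
    have hone : ∀ k ∈ Finset.univ.filter (fun k : Fin n => (k : ℕ) < e), ((L w) k) ^ 2 = 1 := by
      apply aux_sum_eq_card
      · intro k hk
        have hk' := (Finset.mem_filter.1 hk).2
        have := hq.1 k hk'
        simp only [Set.mem_Icc] at this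
        nlinarith [this.1, this.2]
      · rw [hfilter, card_filter_lt e hen]
    intro k
    constructor
    · intro hk
      have h1 := hone k (Finset.mem_filter.2 ⟨Finset.mem_univ _, hk⟩)
      have h2 : ((L w) k - 1) * ((L w) k + 1) = 0 := by nlinarith
      rcases mul_eq_zero.1 h2 with h | h
      · left; linarith
      · right; linarith
    · intro hk; exact hq.2 k hk
  -- per-coordinate structure of U on F directions
  have key : ∀ i ∈ F, ∃ (k : Fin n) (c : ℝ), (k : ℕ) < e ∧ (c = 1 ∨ c = -1) ∧
      U (EuclideanSpace.single i (1:ℝ)) = c • EuclideanSpace.single k (1:ℝ) := by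
    intro i hi
    obtain ⟨w', hw'v0⟩ : ∃ w : E n, ∀ j : Fin n, w j = if j = i then (-1:ℝ) else xstar j :=
      ⟨WithLp.toLp 2 (fun j => if j = i then (-1:ℝ) else xstar j), fun _ => rfl⟩
    have hw'C : w' ∈ C := by
      rw [hC]
      constructor
      · intro j hj
        by_cases hji : j = i
        · rw [hw'v0 j, if_pos hji]; norm_num
        · rw [hw'v0 j, if_neg hji, hxstarv j, if_pos hj]; norm_num
      · intro j hj
        have hji : j ≠ i := fun h => hj (h ▸ hi)
        rw [hw'v0 j, if_neg hji, hxstarv j, if_neg hj]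
    have hdiff : xstar - w' = (2:ℝ) • EuclideanSpace.single i (1:ℝ) := by
      apply PiLp.ext; intro j
      simp only [PiLp.sub_apply, PiLp.smul_apply, EuclideanSpace.single_apply, smul_eq_mul,
        hxstarv j, hw'v0 j]
      by_cases hji : j = i
      · rw [if_pos hji, if_pos hji, hji, if_pos hi]; norm_num
      · rw [if_neg hji, if_neg hji, sub_self, mul_zero]
    set g : E n := U (EuclideanSpace.single i (1:ℝ)) with hg
    have hgval : L xstar - L w' = (2:ℝ) • g := by
      rw [hLsub, hdiff, map_smul]
    have hgco : ∀ k : Fin n, g k = (L xstar k - L w' k) / 2 := by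
      intro k
      have h := congrArg (fun z : E n => z k) hgval
      simp only [PiLp.sub_apply, PiLp.smul_apply, smul_eq_mul] at h
      linarith
    have hxv : ∀ j ∈ F, xstar j = 1 ∨ xstar j = -1 := by
      intro j hj; left; rw [hxstarv j, if_pos hj]
    have hw'v : ∀ j ∈ F, w' j = 1 ∨ w' j = -1 := by
      intro j hj
      by_cases hji : j = i
      · right; rw [hw'v0 j, if_pos hji]
      · left; rw [hw'v0 j, if_neg hji, hxstarv j, if_pos hj]
    have hv1 := hvert xstar hxstarC hxv
    have hv2 := hvert w' hw'C hw'v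
    have hgopts : ∀ k : Fin n, g k = 1 ∨ g k = 0 ∨ g k = -1 := by
      intro k
      rw [hgco k]
      by_cases hk : (k : ℕ) < e
      · rcases (hv1 k).1 hk with h1 | h1 <;> rcases (hv2 k).1 hk with h2 | h2 <;>
          rw [h1, h2] <;> norm_num
      · rw [(hv1 k).2 (Nat.not_lt.1 hk), (hv2 k).2 (Nat.not_lt.1 hk)]
        norm_num
    have hgnorm : ∑ k, (g k) ^ 2 = 1 := by
      rw [← norm_sq_eq, hg, U.norm_map, EuclideanSpace.norm_single]
      norm_num
    obtain ⟨k, hk1, hk0⟩ := aux_lemV g hgopts hgnorm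
    have hke : (k : ℕ) < e := by
      by_contra hke
      have h1 : g k = 0 := by
        rw [hgco k, (hv1 k).2 (Nat.not_lt.1 hke), (hv2 k).2 (Nat.not_lt.1 hke)]
        norm_num
      rcases hk1 with h | h <;> rw [h1] at h <;> norm_num at h
    refine ⟨k, g k, hke, hk1, ?_⟩
    apply PiLp.ext; intro l
    simp only [PiLp.smul_apply, EuclideanSpace.single_apply, smul_eq_mul]
    by_cases hlk : l = k
    · rw [if_pos hlk, mul_one, hlk]
    · rw [if_neg hlk, mul_zero]
      exact hk0 l hlk
  choose! ρ η hρe hη hUs using key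
  have hinj : ∀ i ∈ F, ∀ j ∈ F, ρ i = ρ j → i = j := by
    intro i hi j hj hij
    by_contra hne
    have hUeq : U (η j • EuclideanSpace.single i (1:ℝ))
        = U (η i • EuclideanSpace.single j (1:ℝ)) := by
      rw [map_smul, map_smul, hUs i hi, hUs j hj, hij, smul_comm]
    have h2 := U.injective hUeq
    have hL1 : (η j • EuclideanSpace.single i (1:ℝ)) i = η j := by
      simp [PiLp.smul_apply, EuclideanSpace.single_apply]
    have hL2 : (η i • EuclideanSpace.single j (1:ℝ)) i = 0 := by
      simp only [PiLp.smul_apply, EuclideanSpace.single_apply, smul_eq_mul]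
      rw [if_neg (fun h : i = j => hne h), mul_zero]
    have h3 : η j = (0:ℝ) := by rw [← hL1, ← hL2, h2]
    rcases hη j hj with h | h <;> rw [h3] at h <;> norm_num at h
  refine ⟨ρ, η, hρe, hinj, hη, ?_⟩
  intro x hxC i hi
  rw [hC] at hxC
  have hxm : x - m = ∑ j ∈ F, x j • EuclideanSpace.single j (1:ℝ) := by
    apply PiLp.ext; intro l
    rw [PiLp.sub_apply, piLp_sum_apply]
    have hterm : ∀ j : Fin n, (x j • EuclideanSpace.single j (1:ℝ)) l
        = if l = j then x j else 0 := by
      intro j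
      simp only [PiLp.smul_apply, EuclideanSpace.single_apply, smul_eq_mul]
      by_cases hlj : l = j
      · rw [if_pos hlj, if_pos hlj, mul_one]
      · rw [if_neg hlj, if_neg hlj, mul_zero]
    rw [Finset.sum_congr rfl (fun j _ => hterm j), Finset.sum_ite_eq F l (fun j => x j)]
    by_cases hl : l ∈ F
    · rw [if_pos hl, hm l hl, sub_zero]
    · rw [if_neg hl, hxC.2 l hl, sub_self]
  have hLx : L x = ∑ j ∈ F, (x j * η j) • EuclideanSpace.single (ρ j) (1:ℝ) := by
    have h1 := hLsub x m
    rw [hLm, sub_zero] at h1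
    rw [h1, hxm, map_sum]
    apply Finset.sum_congr rfl
    intro j hj
    rw [map_smul, hUs j hj, smul_smul]
  have hterm2 : ∀ j ∈ F, ((x j * η j) • EuclideanSpace.single (ρ j) (1:ℝ)) (ρ i)
      = if j = i then η i * x i else 0 := by
    intro j hj
    simp only [PiLp.smul_apply, EuclideanSpace.single_apply, smul_eq_mul]
    by_cases hji : j = i
    · subst hji; rw [if_pos rfl, if_pos rfl, mul_one]; ring
    · have hr : ρ i ≠ ρ j := fun h => hji (hinj j hj i hi h.symm)
      rw [if_neg hji, if_neg hr, mul_zero]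
  rw [hLx, piLp_sum_apply, Finset.sum_congr rfl hterm2,
    Finset.sum_ite_eq' F i (fun _ => η i * x i), if_pos hi]



lemma aux_pair {p q p' q' : ℝ}
    (h1 : (-q ≤ p ∧ -q' ≤ p') ∨ (q ≤ -p ∧ q' ≤ -p'))
    (h2 : (q ≤ p ∧ q' ≤ p') ∨ (p ≤ q ∧ p' ≤ q')) :
    (|q| ≤ |p| ∧ |q'| ≤ |p'|) ∨ (|p| ≤ |q| ∧ |p'| ≤ |q'|) := by
  rcases h1 with ⟨ha, hb⟩ | ⟨ha, hb⟩ <;> rcases h2 with ⟨hc, hd⟩ | ⟨hc, hd⟩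
  · exact Or.inl ⟨aux_abs_le ha hc, aux_abs_le hb hd⟩
  · exact Or.inr ⟨aux_abs_le (by linarith) hc, aux_abs_le (by linarith) hd⟩
  · refine Or.inr ⟨?_, ?_⟩
    · rw [← abs_neg q]; exact aux_abs_le (by linarith) (by linarith)
    · rw [← abs_neg q']; exact aux_abs_le (by linarith) (by linarith)
  · refine Or.inl ⟨?_, ?_⟩
    · rw [← abs_neg p]; exact aux_abs_le (by linarith) (by linarith)
    · rw [← abs_neg p']; exact aux_abs_le (by linarith) (by linarith)

set_option maxHeartbeats 4000000 in
/-- If `H ∈ K_n`, `x ∈ H`, and `γ ∈ Sym(I^n)` satisfies `γ(x) ∈ H`, then `γ(x) = x`. -/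
theorem stmt15 (n : ℕ) (hn : 1 ≤ n) (H : Set (E n)) (hH : H ∈ Kcal n)
    (x : E n) (hx : x ∈ H) (γ : E n → E n) (hγ : SymI n γ) (hγx : γ x ∈ H) :
    γ x = x := by
  classical
  obtain ⟨c, e, hface, hK⟩ := hH
  obtain ⟨J, hJ1, hJ2, hJcard, hc⟩ := hface
  obtain ⟨hiso, hsurj, hicube⟩ := hγ
  rcases hK with ⟨he0, rfl⟩ | ⟨he1, L, hLconf, hLc, H', ⟨S, hSfund, rfl⟩, rfl⟩
  · -- 0-dimensional face: the set is a singleton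
    subst he0
    have hempty : {i : Fin n | J i = Icc (-1 : ℝ) 1} = ∅ := by
      rw [← Set.ncard_eq_zero]; exact hJcard
    have hsing : ∀ i : Fin n, J i = {-1} ∨ J i = ({1} : Set ℝ) := by
      intro i
      rcases hJ1 i i.isLt with h | h | h
      · exact absurd h (by
          intro hIcc
          exact (Set.eq_empty_iff_forall_notMem.1 hempty i) hIcc)
      · exact Or.inl h
      · exact Or.inr h
    rw [hc] at hx hγx
    apply PiLp.ext; intro i
    rcases hsing i with h | h
    · have h1 := hx i; have h2 := hγx i
      rw [h, Set.mem_singleton_iff] at h1 h2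
      rw [h1, h2]
    · have h1 := hx i; have h2 := hγx i
      rw [h, Set.mem_singleton_iff] at h1 h2
      rw [h1, h2]
  · -- positive-dimensional case
    -- basic facts about L
    have hLinj : Function.Injective L := by
      obtain ⟨μ, U, v, hμ, hLdef⟩ := hLconf
      intro a b hab
      rw [hLdef, hLdef] at hab
      have h1 : μ • U a = μ • U b := by
        have := congrArg (fun z : E n => z - v) hab
        simpa using this
      exact U.injective (smul_right_injective _ (ne_of_gt hμ) h1)
    set F : Finset (Fin n) := Finset.univ.filter (fun i => J i = Icc (-1:ℝ) 1) with hF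
    have hFset : {i : Fin n | J i = Icc (-1 : ℝ) 1} = (F : Set (Fin n)) := by
      ext i; simp [hF]
    have hFcard : F.card = e := by
      rw [hFset, Set.ncard_coe_finset] at hJcard; exact hJcard
    have hIccne1 : Icc (-1:ℝ) 1 ≠ ({1} : Set ℝ) := by
      intro h
      have h1 : (-1:ℝ) ∈ Icc (-1:ℝ) 1 := by norm_num
      rw [h, Set.mem_singleton_iff] at h1; norm_num at h1
    have hIccne2 : Icc (-1:ℝ) 1 ≠ ({-1} : Set ℝ) := by
      intro h
      have h1 : (1:ℝ) ∈ Icc (-1:ℝ) 1 := by norm_num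
      rw [h, Set.mem_singleton_iff] at h1; norm_num at h1
    obtain ⟨m, hmv⟩ : ∃ m : E n, ∀ i : Fin n,
        m i = if J i = ({-1} : Set ℝ) then (-1:ℝ) else if J i = ({1} : Set ℝ) then 1 else 0 :=
      ⟨WithLp.toLp 2 (fun i => if J i = ({-1} : Set ℝ) then (-1:ℝ) else if J i = ({1} : Set ℝ) then 1 else 0), fun _ => rfl⟩
    have hm0 : ∀ i ∈ F, m i = 0 := by
      intro i hi
      have hJi : J i = Icc (-1:ℝ) 1 := (Finset.mem_filter.1 hi).2
      rw [hmv i, if_neg (by rw [hJi]; exact hIccne2), if_neg (by rw [hJi]; exact hIccne1)]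
    have hsingF : ∀ i ∉ F, (J i = {-1} ∧ m i = -1) ∨ (J i = ({1}:Set ℝ) ∧ m i = 1) := by
      intro i hi
      have hne : ¬ J i = Icc (-1:ℝ) 1 := by
        intro h; exact hi (Finset.mem_filter.2 ⟨Finset.mem_univ _, h⟩)
      rcases hJ1 i i.isLt with h | h | h
      · exact absurd h hne
      · left; exact ⟨h, by rw [hmv i, if_pos h]⟩
      · right
        have hd : ¬ (({1}:Set ℝ) = ({-1}:Set ℝ)) := by
          intro h2
          have := Set.singleton_eq_singleton_iff.1 h2
          norm_num at this
        refine ⟨h, ?_⟩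
        rw [hmv i, h, if_neg hd, if_pos rfl]
    have hcform : c = {z : E n | (∀ i ∈ F, z i ∈ Icc (-1:ℝ) 1) ∧ ∀ i ∉ F, z i = m i} := by
      rw [hc]; ext z
      simp only [Set.mem_setOf_eq]
      constructor
      · intro hz
        refine ⟨fun i hi => by rw [← (Finset.mem_filter.1 hi).2]; exact hz i, fun i hi => ?_⟩
        rcases hsingF i hi with ⟨hJi, hmi⟩ | ⟨hJi, hmi⟩ <;>
          · have := hz i; rw [hJi, Set.mem_singleton_iff] at this; rw [this, hmi]
      · rintro ⟨h1, h2⟩ i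
        by_cases hi : i ∈ F
        · rw [(Finset.mem_filter.1 hi).2]; exact h1 i hi
        · rcases hsingF i hi with ⟨hJi, hmi⟩ | ⟨hJi, hmi⟩ <;>
            · rw [hJi, Set.mem_singleton_iff, h2 i hi, hmi]
    obtain ⟨ρ, η, hρe, hρinj, hη, hkey⟩ := face_map n e he1 F hFcard m hm0 c hcform L hLconf hLc
    -- x and γ x belong to c
    have hS0 : ∃ T ∈ S, T ⊆ IcubeD n e := by
      have hi0 : ∃ i0 : Fin n, (i0:ℕ) < e := ⟨⟨0, by omega⟩, by simp; omega⟩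
      obtain ⟨i0, hi0⟩ := hi0
      rcases (hSfund.2 i0 i0 hi0 hi0 le_rfl).1 with hmem | hmem
      · exact ⟨_, hmem, fun z hz => hz.1⟩
      · exact ⟨_, hmem, fun z hz => hz.1⟩
    have hsubc : L ⁻¹' (⋂₀ S) ⊆ c := by
      intro z hz
      obtain ⟨T, hT, hTsub⟩ := hS0
      have h1 : L z ∈ IcubeD n e := hTsub (Set.mem_sInter.1 (Set.mem_preimage.1 hz) T hT)
      rw [← hLc] at h1
      obtain ⟨z', hz', hzz⟩ := h1
      have hLinj2 : Function.Injective L := by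
        obtain ⟨μ, U, v, hμ, hLdef⟩ := hLconf
        intro a b hab
        rw [hLdef, hLdef] at hab
        have h1 : μ • U a = μ • U b := by
          have := congrArg (fun w : E n => w - v) hab
          simpa using this
        exact U.injective (smul_right_injective _ (ne_of_gt hμ) h1)
      rwa [hLinj2 hzz] at hz'
    have hxc : x ∈ c := hsubc hx
    have hyc : γ x ∈ c := hsubc hγx
    have hcsub : c ⊆ Icube n := by
      intro z hz
      rw [hc] at hz
      constructor
      · intro i _
        rcases hJ1 i i.isLt with h | h | h
        · rw [← h]; exact hz i
        · have := hz i; rw [h, Set.mem_singleton_iff] at this; rw [this]; norm_num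
        · have := hz i; rw [h, Set.mem_singleton_iff] at this; rw [this]; norm_num
      · intro i hi; exact absurd i.isLt (by omega)
    have hxI : x ∈ Icube n := hcsub hxc
    have hyI : γ x ∈ Icube n := hcsub hyc
    -- γ is a signed permutation
    have hγbij : Function.Bijective γ := ⟨hiso.injective, hsurj⟩
    set γe : E n ≃ᵢ E n := ⟨Equiv.ofBijective γ hγbij, hiso⟩ with hγedef
    have hadd : ∀ a : E n, γ 0 + γ 0 = γ a + γ (-a) := by
      intro a
      have h2 : γ (midpoint ℝ a (-a)) = midpoint ℝ (γ a) (γ (-a)) := γe.map_midpoint a (-a)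
      rw [midpoint_self_neg] at h2
      have h3 := midpoint_add_self ℝ (γ a) (γ (-a))
      rw [← h2] at h3
      exact h3
    have hsymI : ∀ z ∈ Icube n, γ 0 + γ 0 - z ∈ Icube n := by
      intro z hz
      rw [← hicube] at hz
      obtain ⟨a, haI, rfl⟩ := hz
      have hnegI : -a ∈ Icube n := by
        refine ⟨fun i _ => ?_, fun i hi => absurd i.isLt (by omega)⟩
        have := haI.1 i i.isLt
        rw [PiLp.neg_apply]
        simp only [Set.mem_Icc] at this ⊢
        constructor <;> linarith [this.1, this.2]
      have hγna : γ (-a) = γ 0 + γ 0 - γ a := eq_sub_of_add_eq' (hadd a).symm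
      rw [← hγna, ← hicube]
      exact ⟨-a, hnegI, rfl⟩
    have hγ0 : γ 0 = 0 := by
      have hone : WithLp.toLp 2 (fun _ : Fin n => (1:ℝ)) ∈ Icube n :=
        ⟨fun i _ => by norm_num, fun i hi => absurd i.isLt (by omega)⟩
      have hmone : WithLp.toLp 2 (fun _ : Fin n => (-1:ℝ)) ∈ Icube n :=
        ⟨fun i _ => by norm_num, fun i hi => absurd i.isLt (by omega)⟩
      apply PiLp.ext; intro i
      have h1 := (hsymI _ hone).1 i i.isLt
      have h2 := (hsymI _ hmone).1 i i.isLt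
      rw [PiLp.sub_apply, PiLp.add_apply] at h1 h2
      simp only [WithLp.ofLp_toLp, Set.mem_Icc] at h1 h2
      have : γ 0 i = 0 := by linarith [h1.1, h1.2, h2.1, h2.2]
      simpa using this
    have hγConf : ConfAffine n γ := by
      refine ⟨1, γe.toRealLinearIsometryEquivOfMapZero hγ0, 0, one_pos, fun z => ?_⟩
      rw [one_smul, add_zero]
      exact (congrFun (γe.coe_toRealLinearIsometryEquivOfMapZero hγ0) z).symm
    have hIC : Icube n = {z : E n | (∀ i ∈ Finset.univ, z i ∈ Icc (-1:ℝ) 1) ∧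
        ∀ i ∉ Finset.univ, z i = (0 : E n) i} := by
      ext z
      simp only [Set.mem_setOf_eq]
      constructor
      · intro hz
        exact ⟨fun i _ => hz.1 i i.isLt, fun i hi => absurd (Finset.mem_univ i) hi⟩
      · intro hz
        exact ⟨fun i _ => hz.1 i (Finset.mem_univ i), fun i hi => absurd i.isLt (by omega)⟩
    obtain ⟨ργ, ηγ, hργe, hργinj, hηγ, hγkey⟩ :=
      face_map n n hn Finset.univ (by simp) 0 (fun i _ => rfl) (Icube n) hIC γ hγConf hicube
    have hbijρ : Function.Bijective ργ := Finite.injective_iff_bijective.1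
      (fun a b hab => hργinj a (Finset.mem_univ a) b (Finset.mem_univ b) hab)
    have hms_univ : Finset.univ.val.map (fun k => |γ x k|)
        = Finset.univ.val.map (fun i => |x i|) := by
      rw [← aux_map_perm (Equiv.ofBijective ργ hbijρ) (fun k => |γ x k|)]
      apply Multiset.map_congr rfl
      intro i _
      show |γ x (ργ i)| = |x i|
      rw [hγkey x hxI i (Finset.mem_univ i), abs_mul]
      rcases hηγ i (Finset.mem_univ i) with h | h <;> rw [h] <;> norm_num
    have hxc' := hxc
    have hyc' := hyc
    rw [hcform] at hxc' hyc'
    have hcompl : ∀ i, i ∉ F → γ x i = x i ∧ |x i| = 1 := by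
      intro i hi
      refine ⟨by rw [hyc'.2 i hi, hxc'.2 i hi], ?_⟩
      rcases hsingF i hi with ⟨hJi, hmi⟩ | ⟨hJi, hmi⟩ <;>
        · rw [hxc'.2 i hi, hmi]; norm_num
    have hvals : F.val + Fᶜ.val = (Finset.univ : Finset (Fin n)).val := by
      have h1 : (F.disjUnion Fᶜ disjoint_compl_right).val = F.val + Fᶜ.val := rfl
      rw [← h1, Finset.disjUnion_eq_union, Finset.union_compl]
    have hmsF : F.val.map (fun i => |x i|) = F.val.map (fun i => |γ x i|) := by
      have h1 : (F.val + Fᶜ.val).map (fun k => |γ x k|)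
          = (F.val + Fᶜ.val).map (fun i => |x i|) := by
        rw [hvals]; exact hms_univ
      rw [Multiset.map_add, Multiset.map_add] at h1
      have h2 : Fᶜ.val.map (fun k => |γ x k|) = Fᶜ.val.map (fun i => |x i|) :=
        Multiset.map_congr rfl (fun i hi => by
          rw [(hcompl i (Finset.mem_compl.1 (Finset.mem_val.mp hi))).1])
      rw [h2] at h1
      exact (add_right_cancel h1).symm
    have hxS : ∀ T ∈ S, L x ∈ T := fun T hT => Set.mem_sInter.1 (Set.mem_preimage.1 hx) T hT
    have hyS : ∀ T ∈ S, L (γ x) ∈ T :=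
      fun T hT => Set.mem_sInter.1 (Set.mem_preimage.1 hγx) T hT
    have hmono : ∀ i ∈ F, ∀ j ∈ F,
        (|x i| ≤ |x j| ∧ |γ x i| ≤ |γ x j|) ∨ (|x j| ≤ |x i| ∧ |γ x j| ≤ |γ x i|) := by
      intro i hi j hj
      have hui : L x (ρ i) = η i * x i := hkey x hxc i hi
      have huj : L x (ρ j) = η j * x j := hkey x hxc j hj
      have hwi : L (γ x) (ρ i) = η i * γ x i := hkey (γ x) hyc i hi
      have hwj : L (γ x) (ρ j) = η j * γ x j := hkey (γ x) hyc j hj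
      have habsi : |η i * x i| = |x i| := by
        rcases hη i hi with h | h <;> rw [h, abs_mul] <;> norm_num
      have habsj : |η j * x j| = |x j| := by
        rcases hη j hj with h | h <;> rw [h, abs_mul] <;> norm_num
      have habswi : |η i * γ x i| = |γ x i| := by
        rcases hη i hi with h | h <;> rw [h, abs_mul] <;> norm_num
      have habswj : |η j * γ x j| = |γ x j| := by
        rcases hη j hj with h | h <;> rw [h, abs_mul] <;> norm_num
      rcases le_total (ρ i) (ρ j) with hkl | hkl
      · obtain ⟨hA, hB⟩ := hSfund.2 (ρ i) (ρ j) (hρe i hi) (hρe j hj) hkl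
        have h1 : (-(η j * x j) ≤ η i * x i ∧ -(η j * γ x j) ≤ η i * γ x i) ∨
            (η j * x j ≤ -(η i * x i) ∧ η j * γ x j ≤ -(η i * γ x i)) := by
          rcases hA with hmem | hmem
          · left
            have e1 := (hxS _ hmem).2
            have e2 := (hyS _ hmem).2
            rw [hui, huj] at e1
            rw [hwi, hwj] at e2
            constructor <;> linarith
          · right
            have e1 := (hxS _ hmem).2
            have e2 := (hyS _ hmem).2
            rw [hui, huj] at e1
            rw [hwi, hwj] at e2
            constructor <;> linarith
        have h2 : (η j * x j ≤ η i * x i ∧ η j * γ x j ≤ η i * γ x i) ∨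
            (η i * x i ≤ η j * x j ∧ η i * γ x i ≤ η j * γ x j) := by
          rcases hB with hmem | hmem
          · left
            have e1 := (hxS _ hmem).2
            have e2 := (hyS _ hmem).2
            rw [hui, huj] at e1
            rw [hwi, hwj] at e2
            constructor <;> linarith
          · right
            have e1 := (hxS _ hmem).2
            have e2 := (hyS _ hmem).2
            rw [hui, huj] at e1
            rw [hwi, hwj] at e2
            constructor <;> linarith
        have hres := aux_pair h1 h2
        rw [habsi, habsj, habswi, habswj] at hres
        tauto
      · obtain ⟨hA, hB⟩ := hSfund.2 (ρ j) (ρ i) (hρe j hj) (hρe i hi) hkl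
        have h1 : (-(η i * x i) ≤ η j * x j ∧ -(η i * γ x i) ≤ η j * γ x j) ∨
            (η i * x i ≤ -(η j * x j) ∧ η i * γ x i ≤ -(η j * γ x j)) := by
          rcases hA with hmem | hmem
          · left
            have e1 := (hxS _ hmem).2
            have e2 := (hyS _ hmem).2
            rw [hui, huj] at e1
            rw [hwi, hwj] at e2
            constructor <;> linarith
          · right
            have e1 := (hxS _ hmem).2
            have e2 := (hyS _ hmem).2
            rw [hui, huj] at e1
            rw [hwi, hwj] at e2
            constructor <;> linarith
        have h2 : (η i * x i ≤ η j * x j ∧ η i * γ x i ≤ η j * γ x j) ∨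
            (η j * x j ≤ η i * x i ∧ η j * γ x j ≤ η i * γ x i) := by
          rcases hB with hmem | hmem
          · left
            have e1 := (hxS _ hmem).2
            have e2 := (hyS _ hmem).2
            rw [hui, huj] at e1
            rw [hwi, hwj] at e2
            constructor <;> linarith
          · right
            have e1 := (hxS _ hmem).2
            have e2 := (hyS _ hmem).2
            rw [hui, huj] at e1
            rw [hwi, hwj] at e2
            constructor <;> linarith
        have hres := aux_pair h1 h2
        rw [habsi, habsj, habswi, habswj] at hres
        tauto
    have habs : ∀ i ∈ F, |x i| = |γ x i| :=
      aux_tourn (fun i => |x i|) (fun i => |γ x i|) F hmono hmsF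
    apply PiLp.ext; intro i
    by_cases hiF : i ∈ F
    · have hsgn : (0 ≤ η i * x i ∧ 0 ≤ η i * γ x i) ∨
          (η i * x i ≤ 0 ∧ η i * γ x i ≤ 0) := by
        rcases (hSfund.2 (ρ i) (ρ i) (hρe i hiF) (hρe i hiF) le_rfl).1 with hmem | hmem
        · left
          have e1 := (hxS _ hmem).2
          have e2 := (hyS _ hmem).2
          rw [hkey x hxc i hiF] at e1
          rw [hkey (γ x) hyc i hiF] at e2
          constructor <;> linarith
        · right
          have e1 := (hxS _ hmem).2
          have e2 := (hyS _ hmem).2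
          rw [hkey x hxc i hiF] at e1
          rw [hkey (γ x) hyc i hiF] at e2
          constructor <;> linarith
      have hηne : η i ≠ 0 := by rcases hη i hiF with h | h <;> rw [h] <;> norm_num
      apply aux_eq_of_abs hηne (habs i hiF).symm
      rcases hsgn with ⟨h1, h2⟩ | ⟨h1, h2⟩
      · exact Or.inl ⟨h2, h1⟩
      · exact Or.inr ⟨h2, h1⟩
    · exact (hcompl i hiF).1
end
end

section
/- Let R be an n-dimensional orthotope in ℝ^n and let γ be a surjective isometry of ℝ^n with γ(R) = R. If H ∈ K_n(R) and x ∈ H satisfy γ(x) ∈ H, then γ(x) = x. -/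
open Set Function

noncomputable section

def Cube (d : ℕ) : Set (E d) := {x | ∀ i, |x i| ≤ 1}
lemma Eext {d : ℕ} {x y : E d} (h : ∀ i, x i = y i) : x = y := PiLp.ext h

-- sup of abs of coordinates
section msup
variable {d : ℕ}

def msup (hd : 0 < d) (x : E d) : ℝ :=
  Finset.univ.sup' (Finset.univ_nonempty_iff.2 ⟨⟨0, hd⟩⟩) (fun i => |x i|)

lemma le_msup (hd : 0 < d) (x : E d) (k : Fin d) : |x k| ≤ msup hd x :=
  Finset.le_sup' (fun i => |x i|) (Finset.mem_univ k)

lemma msup_le (hd : 0 < d) (x : E d) (r : ℝ) (h : ∀ k, |x k| ≤ r) : msup hd x ≤ r :=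
  Finset.sup'_le _ _ (fun k _ => h k)

lemma msup_nonneg (hd : 0 < d) (x : E d) : 0 ≤ msup hd x :=
  le_trans (abs_nonneg _) (le_msup hd x ⟨0, hd⟩)

lemma mem_cube_iff_msup (hd : 0 < d) (x : E d) : x ∈ Cube d ↔ msup hd x ≤ 1 := by
  constructor
  · exact fun h => msup_le hd x 1 h
  · intro h k; exact le_trans (le_msup hd x k) h

lemma msup_smul (hd : 0 < d) (x : E d) (r : ℝ) (hr : 0 ≤ r) :
    msup hd (r • x) = r * msup hd x := by
  have habs : ∀ k, |(r • x) k| = r * |x k| := by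
    intro k
    rw [PiLp.smul_apply, smul_eq_mul, abs_mul, abs_of_nonneg hr]
  apply le_antisymm
  · apply msup_le; intro k; rw [habs]
    exact mul_le_mul_of_nonneg_left (le_msup hd x k) hr
  · rcases eq_or_lt_of_le hr with h0 | h0
    · have : msup hd ((0:ℝ) • x) = 0 := by
        have : (0:ℝ) • x = 0 := zero_smul _ _
        rw [this]
        apply le_antisymm
        · apply msup_le; intro k; rw [PiLp.zero_apply]; simp
        · exact msup_nonneg hd 0
      rw [← h0, zero_mul, ← h0] at *
      rw [this]
    · have h1 : msup hd x ≤ r⁻¹ * msup hd (r • x) := by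
        apply msup_le; intro k
        have : |x k| = r⁻¹ * |(r • x) k| := by
          rw [habs]; field_simp
        rw [this]
        exact mul_le_mul_of_nonneg_left (le_msup hd _ k) (by positivity)
      calc r * msup hd x ≤ r * (r⁻¹ * msup hd (r • x)) :=
              mul_le_mul_of_nonneg_left h1 hr
        _ = msup hd (r • x) := by field_simp

lemma msup_eq_zero (hd : 0 < d) (x : E d) (h : msup hd x = 0) : x = 0 := by
  apply Eext; intro k
  have := le_msup hd x k
  rw [h] at this
  have := abs_nonpos_iff.mp this
  simpa [PiLp.zero_apply] using this
end msup


def chi (d : ℕ) (j : Fin d) : E d := EuclideanSpace.single j (1:ℝ)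

lemma sum_apply' {d : ℕ} (s : Finset (Fin d)) (f : Fin d → E d) (k : Fin d) :
    (∑ j ∈ s, f j) k = ∑ j ∈ s, f j k := by
  induction s using Finset.cons_induction with
  | empty => simp [PiLp.zero_apply]
  | cons a s ha ih => rw [Finset.sum_cons, Finset.sum_cons, PiLp.add_apply, ih]

lemma expand {d : ℕ} (x : E d) : x = ∑ j, x j • chi d j := by
  apply Eext; intro k
  rw [sum_apply']
  rw [Finset.sum_eq_single k]
  · simp [PiLp.smul_apply, chi, EuclideanSpace.single_apply]
  · intro j _ hj
    simp [PiLp.smul_apply, chi, EuclideanSpace.single_apply, Ne.symm hj]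
  · simp

/-- affine bijection of the cube is a signed permutation -/
lemma cubeAuto {d : ℕ} (hd : 0 < d) (A : E d →ₗ[ℝ] E d) (t : E d)
    (hinj : Function.Injective (fun x => A x + t))
    (himg : (fun x : E d => A x + t) '' Cube d = Cube d) :
    ∃ (π : Equiv.Perm (Fin d)) (δ : Fin d → ℝ), (∀ k, δ k = 1 ∨ δ k = -1) ∧
      ∀ (x : E d) (k : Fin d), A x k + t k = δ k * x (π k) := by
  have hmem : ∀ x : E d, x ∈ Cube d ↔ A x + t ∈ Cube d := by
    intro x
    constructor
    · intro hx
      have : A x + t ∈ (fun x : E d => A x + t) '' Cube d := ⟨x, hx, rfl⟩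
      rwa [himg] at this
    · intro hx
      rw [← himg] at hx
      obtain ⟨x', hx', he⟩ := hx
      have : x' = x := hinj he
      rwa [← this]
  have hAinj : Function.Injective A := by
    intro x x' h
    have : A x + t = A x' + t := by rw [h]
    exact hinj this
  have hAsurj : Function.Surjective A :=
    (LinearMap.injective_iff_surjective).mp hAinj
  -- t = 0
  have hcube0 : (0 : E d) ∈ Cube d := by intro k; rw [PiLp.zero_apply]; simp
  have hneg : ∀ v : E d, v ∈ Cube d → -v ∈ Cube d := by
    intro v hv k; rw [PiLp.neg_apply, abs_neg]; exact hv k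
  have hstep : ∀ v : E d, v ∈ Cube d → v + (2:ℝ) • t ∈ Cube d := by
    intro v hv
    obtain ⟨x, hx⟩ := hAsurj (v + t)
    have h1 : A (-x) + t = -v := by
      rw [map_neg, hx]; abel
    have h2 : -x ∈ Cube d := (hmem (-x)).mpr (by rw [h1]; exact hneg v hv)
    have h3 : x ∈ Cube d := by
      have := hneg _ h2; rwa [neg_neg] at this
    have h4 := (hmem x).mp h3
    rw [hx] at h4
    have : v + t + t = v + (2:ℝ) • t := by
      rw [two_smul]; abel
    rwa [this] at h4
  have hiter : ∀ m : ℕ, (m : ℝ) • ((2:ℝ) • t) ∈ Cube d := by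
    intro m
    induction m with
    | zero => simpa using hcube0
    | succ m ih =>
        have := hstep _ ih
        have he : (m:ℝ) • ((2:ℝ)•t) + (2:ℝ) • t = ((m+1 : ℕ):ℝ) • ((2:ℝ)•t) := by
          push_cast
          rw [add_smul, one_smul]
        rwa [he] at this
  have ht0 : t = 0 := by
    apply Eext; intro k
    by_contra hk
    have hk' : 0 < |t k| := abs_pos.mpr (fun h => hk (by rw [h, PiLp.zero_apply]))
    obtain ⟨m, hm⟩ := exists_nat_gt ((2 * |t k|)⁻¹)
    have h1 := hiter m k
    rw [PiLp.smul_apply, PiLp.smul_apply, smul_eq_mul, smul_eq_mul, abs_mul, abs_mul] at h1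
    have hmpos : ((2:ℝ)*|t k|)⁻¹ < m := hm
    have : 1 < (m:ℝ) * (2 * |t k|) := by
      rw [inv_lt_iff_one_lt_mul₀ (by positivity)] at hmpos
      linarith [hmpos]
    simp only [Nat.abs_cast, abs_two] at h1
    nlinarith
  subst ht0
  simp only [add_zero] at hmem hinj himg ⊢
  -- A is an msup-isometry
  have hiso : ∀ x : E d, msup hd (A x) = msup hd x := by
    intro x
    have key : ∀ y : E d, msup hd y ≤ 1 → msup hd (A y) ≤ 1 := by
      intro y hy
      exact (mem_cube_iff_msup hd _).mp ((hmem y).mp ((mem_cube_iff_msup hd _).mpr hy))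
    have key2 : ∀ y : E d, msup hd (A y) ≤ 1 → msup hd y ≤ 1 := by
      intro y hy
      exact (mem_cube_iff_msup hd _).mp ((hmem y).mpr ((mem_cube_iff_msup hd _).mpr hy))
    apply le_antisymm
    · rcases eq_or_lt_of_le (msup_nonneg hd x) with h0 | h0
      · rw [msup_eq_zero hd x h0.symm, map_zero]
      · set r := msup hd x with hr
        have h1 : msup hd (r⁻¹ • x) ≤ 1 := by
          rw [msup_smul hd x r⁻¹ (by positivity), ← hr]
          rw [inv_mul_cancel₀ (ne_of_gt h0)]
        have h2 := key _ h1
        rw [map_smul, msup_smul hd (A x) r⁻¹ (by positivity)] at h2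
        calc msup hd (A x) = r * (r⁻¹ * msup hd (A x)) := by field_simp
          _ ≤ r * 1 := mul_le_mul_of_nonneg_left h2 (le_of_lt h0)
          _ = r := mul_one r
    · rcases eq_or_lt_of_le (msup_nonneg hd (A x)) with h0 | h0
      · have hx0 : A x = 0 := msup_eq_zero hd _ h0.symm
        have hx' : x = 0 := hAinj (by rw [hx0, map_zero])
        have hzero : msup hd (0 : E d) = 0 := by
          apply le_antisymm _ (msup_nonneg hd 0)
          apply msup_le; intro k; rw [PiLp.zero_apply]; simp
        rw [hx', map_zero, hzero]
      · set r := msup hd (A x) with hr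
        have h1 : msup hd (A (r⁻¹ • x)) ≤ 1 := by
          rw [map_smul, msup_smul hd (A x) r⁻¹ (by positivity), ← hr,
            inv_mul_cancel₀ (ne_of_gt h0)]
        have h2 := key2 _ h1
        rw [msup_smul hd x r⁻¹ (by positivity)] at h2
        calc msup hd x = r * (r⁻¹ * msup hd x) := by field_simp
          _ ≤ r * 1 := mul_le_mul_of_nonneg_left h2 (le_of_lt h0)
          _ = r := mul_one r
  -- basis vectors
  have hχdef : ∀ j, chi d j = EuclideanSpace.single j (1:ℝ) := fun _ => rfl
  have hchimsup : ∀ j, msup hd (chi d j) = 1 := by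
    intro j
    apply le_antisymm
    · apply msup_le; intro k
      simp only [chi, EuclideanSpace.single_apply]
      split <;> simp
    · have := le_msup hd (chi d j) j
      simpa [chi, EuclideanSpace.single_apply] using this
  have hcm : ∀ j, msup hd (A (chi d j)) = 1 := fun j => by rw [hiso, hchimsup]
  have hpair : ∀ i j, i ≠ j → ∀ k, |A (chi d i) k| + |A (chi d j) k| ≤ 1 := by
    intro i j hij k
    have hplus : msup hd (chi d i + chi d j) ≤ 1 := by
      apply msup_le; intro l
      rw [PiLp.add_apply]
      simp only [chi, EuclideanSpace.single_apply]
      split_ifs with h1 h2 h3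
      · exact absurd (h1.symm.trans h2) hij
      · norm_num
      · norm_num
      · norm_num
    have hminus : msup hd (chi d i - chi d j) ≤ 1 := by
      apply msup_le; intro l
      rw [PiLp.sub_apply]
      simp only [chi, EuclideanSpace.single_apply]
      split_ifs <;> norm_num
    have h1 : |A (chi d i) k + A (chi d j) k| ≤ 1 := by
      have e1 : A (chi d i) k + A (chi d j) k = A (chi d i + chi d j) k := by
        rw [map_add, PiLp.add_apply]
      rw [e1]
      exact le_trans (le_msup hd _ k) (by rw [hiso]; exact hplus)
    have h2 : |A (chi d i) k - A (chi d j) k| ≤ 1 := by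
      have e1 : A (chi d i) k - A (chi d j) k = A (chi d i - chi d j) k := by
        rw [map_sub, PiLp.sub_apply]
      rw [e1]
      exact le_trans (le_msup hd _ k) (by rw [hiso]; exact hminus)
    rw [abs_le] at h1 h2
    rcases abs_cases (A (chi d i) k) with ⟨e1, _⟩|⟨e1, _⟩ <;>
      rcases abs_cases (A (chi d j) k) with ⟨e2, _⟩|⟨e2, _⟩ <;> rw [e1, e2] <;> linarith
  have hpk : ∀ j, ∃ k, |A (chi d j) k| = 1 := by
    intro j
    obtain ⟨k, _, hk⟩ := Finset.exists_mem_eq_sup' (Finset.univ_nonempty_iff.2 ⟨⟨0, hd⟩⟩)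
      (fun k => |A (chi d j) k|)
    exact ⟨k, by rw [← hk, ← msup, hcm]; exact hd⟩
  choose σ hσ using hpk
  have hσinj : Function.Injective σ := by
    intro i j hij
    by_contra hne
    have := hpair i j hne (σ i)
    rw [hσ i, hij, hσ j] at this
    linarith
  let σe : Equiv.Perm (Fin d) := Equiv.ofBijective σ (Finite.injective_iff_bijective.mp hσinj)
  have hσe : ∀ j, σe j = σ j := fun j => rfl
  refine ⟨σe.symm, fun k => A (chi d (σe.symm k)) k, ?_, ?_⟩
  · intro k
    have h1 : σ (σe.symm k) = k := by
      rw [← hσe]; exact σe.apply_symm_apply k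
    have := hσ (σe.symm k)
    rw [h1] at this
    rcases abs_eq (by norm_num : (0:ℝ) ≤ 1) |>.mp this with h|h
    · exact Or.inl h
    · exact Or.inr h
  · intro x k
    have hzero : ∀ j, j ≠ σe.symm k → A (chi d j) k = 0 := by
      intro j hj
      have h1 : σ (σe.symm k) = k := by
        rw [← hσe]; exact σe.apply_symm_apply k
      have h2 := hσ (σe.symm k)
      rw [h1] at h2
      have h3 := hpair j (σe.symm k) hj k
      rw [h2] at h3
      have : |A (chi d j) k| ≤ 0 := by linarith
      exact abs_nonpos_iff.mp this
    have e1 : A x = ∑ j, x j • A (chi d j) := by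
      conv_lhs => rw [expand x]
      rw [map_sum]
      congr 1
      funext j
      rw [map_smul]
    have e2 : A x k = ∑ j, x j * A (chi d j) k := by
      rw [e1, sum_apply']
      exact Finset.sum_congr rfl (fun j _ => by rw [PiLp.smul_apply, smul_eq_mul])
    rw [PiLp.zero_apply, add_zero, e2, Finset.sum_eq_single (σe.symm k)]
    · exact mul_comm _ _
    · intro j _ hj
      rw [hzero j hj, mul_zero]
    · intro h; exact absurd (Finset.mem_univ _) h

open scoped Classical in
lemma comono_aux {m : ℕ} (u v : Fin m → ℝ) (τ : Equiv.Perm (Fin m))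
    (hv : ∀ i, v i = u (τ i)) (hco : ∀ i j, 0 ≤ (u i - u j) * (v i - v j)) :
    ∀ k, ¬ (u k < v k) := by
  intro k hk
  set t := v k with ht
  set A := Finset.univ.filter (fun i => t ≤ v i) with hA
  set B := Finset.univ.filter (fun i => t ≤ u i) with hB
  have hcard : A.card = B.card := by
    apply Finset.card_bij (fun i _ => τ i)
    · intro i hi
      rw [hA, Finset.mem_filter] at hi
      rw [hB, Finset.mem_filter]
      exact ⟨Finset.mem_univ _, by rw [← hv]; exact hi.2⟩
    · intro i _ j _ hij
      exact τ.injective hij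
    · intro j hj
      rw [hB, Finset.mem_filter] at hj
      refine ⟨τ.symm j, ?_, τ.apply_symm_apply j⟩
      rw [hA, Finset.mem_filter]
      refine ⟨Finset.mem_univ _, ?_⟩
      rw [hv, τ.apply_symm_apply]
      exact hj.2
  have hBA : B ⊆ A := by
    intro i hi
    rw [hB, Finset.mem_filter] at hi
    rw [hA, Finset.mem_filter]
    refine ⟨Finset.mem_univ _, ?_⟩
    have h1 : 0 < u i - u k := by linarith [hi.2]
    have h2 : 0 ≤ (u i - u k) * (v i - v k) := hco i k
    nlinarith
  have hkA : k ∈ A := by rw [hA, Finset.mem_filter]; exact ⟨Finset.mem_univ _, le_refl _⟩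
  have hkB : k ∉ B := by rw [hB, Finset.mem_filter]; push_neg; intro _; linarith
  have : B ⊂ A := Finset.ssubset_iff_of_subset hBA |>.mpr ⟨k, hkA, hkB⟩
  exact absurd hcard (ne_of_gt (Finset.card_lt_card this))

lemma comono_eq {m : ℕ} (u v : Fin m → ℝ) (τ : Equiv.Perm (Fin m))
    (hv : ∀ i, v i = u (τ i)) (hco : ∀ i j, 0 ≤ (u i - u j) * (v i - v j)) :
    ∀ k, v k = u k := by
  intro k
  have h1 := comono_aux u v τ hv hco k
  have h2 := comono_aux v u τ.symm
    (fun i => by rw [hv, τ.apply_symm_apply])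
    (fun i j => by rw [mul_comm]; exact hco i j) k
  push_neg at h1 h2
  exact le_antisymm h1 h2

lemma pair_rigid (P P' Q Q' sk sl : ℝ) (hsk : sk = 1 ∨ sk = -1) (hsl : sl = 1 ∨ sl = -1)
    (h1 : 0 ≤ sk * P) (h2 : 0 ≤ sk * Q) (h3 : 0 ≤ sl * P') (h4 : 0 ≤ sl * Q')
    (hsum : (0 ≤ P + P' ∧ 0 ≤ Q + Q') ∨ (P + P' ≤ 0 ∧ Q + Q' ≤ 0))
    (hdiff : (P' ≤ P ∧ Q' ≤ Q) ∨ (P ≤ P' ∧ Q ≤ Q')) :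
    0 ≤ (|P| - |P'|) * (|Q| - |Q'|) := by
  have hP : |P| = sk * P := by
    rcases hsk with h|h <;> subst h
    · rw [one_mul] at h1 ⊢; exact abs_of_nonneg h1
    · rw [neg_one_mul] at h1 ⊢; exact abs_of_nonpos (by linarith)
  have hQ : |Q| = sk * Q := by
    rcases hsk with h|h <;> subst h
    · rw [one_mul] at h2 ⊢; exact abs_of_nonneg h2
    · rw [neg_one_mul] at h2 ⊢; exact abs_of_nonpos (by linarith)
  have hP' : |P'| = sl * P' := by
    rcases hsl with h|h <;> subst h
    · rw [one_mul] at h3 ⊢; exact abs_of_nonneg h3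
    · rw [neg_one_mul] at h3 ⊢; exact abs_of_nonpos (by linarith)
  have hQ' : |Q'| = sl * Q' := by
    rcases hsl with h|h <;> subst h
    · rw [one_mul] at h4 ⊢; exact abs_of_nonneg h4
    · rw [neg_one_mul] at h4 ⊢; exact abs_of_nonpos (by linarith)
  rw [hP, hQ, hP', hQ']
  rcases hsk with h|h <;> rcases hsl with h'|h' <;> subst h <;> subst h' <;>
    rcases hsum with ⟨hs1, hs2⟩|⟨hs1, hs2⟩ <;> rcases hdiff with ⟨hd1, hd2⟩|⟨hd1, hd2⟩ <;>
    nlinarith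

lemma sign_eq (σ a b : ℝ) (hσ : σ = 1 ∨ σ = -1) (h1 : 0 ≤ σ * a) (h2 : 0 ≤ σ * b)
    (h3 : |a| = |b|) : a = b := by
  rcases hσ with h|h <;> subst h
  · rw [one_mul] at h1 h2
    rw [abs_of_nonneg h1, abs_of_nonneg h2] at h3; exact h3
  · rw [neg_one_mul] at h1 h2
    rw [abs_of_nonpos (by linarith : a ≤ 0), abs_of_nonpos (by linarith : b ≤ 0)] at h3
    linarith

lemma Icube_eq_Cube (n : ℕ) : Icube n = Cube n := by
  ext x
  constructor
  · intro h i
    have := h.1 i i.isLt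
    rw [mem_Icc] at this
    rw [abs_le]; exact this
  · intro h
    refine ⟨fun i _ => ?_, fun i hi => absurd i.isLt (not_lt.2 hi)⟩
    rw [mem_Icc, ← abs_le]; exact h i

lemma stretch_img (n : ℕ) (a : Fin n → ℝ) (ha : ∀ i, 0 < a i) :
    stretch n a '' StdOrtho n a = Icube n := by
  ext u
  rw [Icube_eq_Cube]
  constructor
  · rintro ⟨x, hx, rfl⟩ i
    have h1 := hx i
    rw [mem_Icc] at h1
    have h2 : |x i| ≤ a i := abs_le.2 h1
    show |x i / a i| ≤ 1
    rw [abs_div, abs_of_pos (ha i)]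
    rw [div_le_one (ha i)]
    exact h2
  · intro hu
    refine ⟨WithLp.toLp 2 (fun i => u i * a i), fun i => ?_, Eext fun i => ?_⟩
    · rw [mem_Icc]
      have h2 := abs_le.1 (hu i)
      have hb : -a i ≤ u i * a i ∧ u i * a i ≤ a i := by
        constructor <;> nlinarith [ha i, h2.1, h2.2]
      exact hb
    · show u i * a i / a i = u i
      rw [mul_div_assoc, div_self (ne_of_gt (ha i)), mul_one]
lemma lin_vanish {e : ℕ} (he : 0 < e) (ℓ : E e → ℝ) (t : ℝ)
    (hsmul : ∀ (r : ℝ) (w : E e), ℓ (r • w) = r * ℓ w)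
    (h : ∀ w ∈ Cube e, ℓ w + t = 0) : ∀ w, ℓ w + t = 0 := by
  have hl0 : ℓ 0 = 0 := by
    have := hsmul 0 0
    rwa [zero_smul, zero_mul] at this
  have hcube0 : (0 : E e) ∈ Cube e := by intro k; rw [PiLp.zero_apply]; simp
  have ht : t = 0 := by have := h 0 hcube0; rw [hl0] at this; linarith
  intro w
  rcases eq_or_lt_of_le (msup_nonneg he w) with h0 | h0
  · rw [msup_eq_zero he w h0.symm, hl0, ht, add_zero]
  · set r := msup he w with hr
    have h1 : r⁻¹ • w ∈ Cube e := by
      rw [mem_cube_iff_msup he, msup_smul he w r⁻¹ (by positivity), ← hr,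
        inv_mul_cancel₀ (ne_of_gt h0)]
    have h2 := h _ h1
    rw [hsmul, ht, add_zero] at h2
    have h3 : ℓ w = 0 := by
      rcases mul_eq_zero.1 h2 with h|h
      · exact absurd h (by positivity)
      · exact h
    rw [h3, ht, add_zero]


set_option maxHeartbeats 1000000 in
/-- If `R` is an `n`-dimensional orthotope, `γ` is a surjective isometry with
`γ(R) = R`, `H ∈ K_n(R)`, `x ∈ H`, and `γ(x) ∈ H`, then `γ(x) = x`. -/
theorem stmt16 (n : ℕ) (hn : 1 ≤ n) (R : Set (E n)) (hR : IsOrtho n R)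
    (γ : E n → E n) (hγiso : Isometry γ) (hγsurj : Surjective γ)
    (hγR : γ '' R = R) (H : Set (E n)) (hH : H ∈ KcalOrtho n R)
    (x : E n) (hx : x ∈ H) (hγx : γ x ∈ H) :
    γ x = x := by
  classical
  obtain ⟨L, a, hLiso, hLsurj, ha, hLR, H', hH'cal, hHeq⟩ := hH
  -- the stretching map and its inverse
  set Df : E n → E n := stretch n a with hDfdef
  set D' : E n → E n := (fun x => WithLp.toLp 2 (fun i => x i * a i)) with hD'def
  have hDfapp : ∀ (u : E n) i, Df u i = u i / a i := fun u i => rfl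
  have hD'app : ∀ (u : E n) i, D' u i = u i * a i := fun u i => rfl
  have hD'D : ∀ u, D' (Df u) = u := by
    intro u; apply Eext; intro i
    rw [hD'app, hDfapp, div_mul_cancel₀ _ (ne_of_gt (ha i))]
  have hDD' : ∀ u, Df (D' u) = u := by
    intro u; apply Eext; intro i
    rw [hDfapp, hD'app, mul_div_cancel_right₀ _ (ne_of_gt (ha i))]
  have hDfinj : Injective Df := fun u v h => by rw [← hD'D u, h, hD'D]
  have hDadd : ∀ u v, Df (u + v) = Df u + Df v := by
    intro u v; apply Eext; intro i
    rw [PiLp.add_apply, hDfapp, hDfapp, hDfapp, PiLp.add_apply, add_div]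
  have hDsub : ∀ u v, Df (u - v) = Df u - Df v := by
    intro u v; apply Eext; intro i
    rw [PiLp.sub_apply, hDfapp, hDfapp, hDfapp, PiLp.sub_apply, sub_div]
  have hDsmul : ∀ (r : ℝ) u, Df (r • u) = r • Df u := by
    intro r u; apply Eext; intro i
    rw [PiLp.smul_apply, hDfapp, PiLp.smul_apply, hDfapp, smul_eq_mul, smul_eq_mul,
      mul_div_assoc]
  have hD'add : ∀ u v, D' (u + v) = D' u + D' v := by
    intro u v; apply Eext; intro i
    rw [PiLp.add_apply, hD'app, hD'app, hD'app, PiLp.add_apply, add_mul]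
  have hD'smul : ∀ (r : ℝ) u, D' (r • u) = r • D' u := by
    intro r u; apply Eext; intro i
    rw [PiLp.smul_apply, hD'app, PiLp.smul_apply, hD'app, smul_eq_mul, smul_eq_mul,
      mul_assoc]
  -- Mazur-Ulam linearizations
  set Le : E n ≃ᵢ E n := ⟨Equiv.ofBijective L ⟨hLiso.injective, hLsurj⟩, hLiso⟩ with hLedef
  set γe : E n ≃ᵢ E n := ⟨Equiv.ofBijective γ ⟨hγiso.injective, hγsurj⟩, hγiso⟩ with hγedef
  set AL : E n ≃ₗᵢ[ℝ] E n := Le.toRealLinearIsometryEquiv with hALdef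
  set Aγ : E n ≃ₗᵢ[ℝ] E n := γe.toRealLinearIsometryEquiv with hAγdef
  have hALapp : ∀ u, AL u = L u - L 0 := by
    intro u
    rw [hALdef]
    exact Le.toRealLinearIsometryEquiv_apply u
  have hAγapp : ∀ u, Aγ u = γ u - γ 0 := by
    intro u
    rw [hAγdef]
    exact γe.toRealLinearIsometryEquiv_apply u
  have hLaff : ∀ u, L u = AL u + L 0 := by intro u; rw [hALapp]; abel
  have hγaff : ∀ u, γ u = Aγ u + γ 0 := by intro u; rw [hAγapp]; abel
  have hALsymmL : ∀ u, AL.symm (L u - L 0) = u := by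
    intro u; rw [← hALapp]; exact AL.symm_apply_apply u
  -- the conjugated map g and its affine structure
  set g : E n → E n := fun u => Df (L (γ (AL.symm (D' u - L 0)))) with hgdef
  set G : E n →ₗ[ℝ] E n :=
    { toFun := fun u => Df (AL (Aγ (AL.symm (D' u))))
      map_add' := by
        intro u v
        show Df (AL (Aγ (AL.symm (D' (u + v)))))
          = Df (AL (Aγ (AL.symm (D' u)))) + Df (AL (Aγ (AL.symm (D' v))))
        rw [hD'add, map_add, map_add, map_add, hDadd]
      map_smul' := by
        intro r u
        show Df (AL (Aγ (AL.symm (D' (r • u)))))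
          = (RingHom.id ℝ) r • Df (AL (Aγ (AL.symm (D' u))))
        rw [hD'smul, map_smul, map_smul, map_smul, hDsmul, RingHom.id_apply] } with hGdef
  have hGapp : ∀ u, G u = Df (AL (Aγ (AL.symm (D' u)))) := fun u => rfl
  set t₀ : E n := Df (AL (γ 0)) + Df (L 0) - Df (AL (Aγ (AL.symm (L 0)))) with ht₀def
  have hgaff : ∀ u, g u = G u + t₀ := by
    intro u
    rw [hgdef, hGapp, ht₀def]
    show Df (L (γ (AL.symm (D' u - L 0)))) = _
    rw [map_sub AL.symm, hγaff (AL.symm (D' u) - AL.symm (L 0)),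
      map_sub Aγ, hLaff (Aγ (AL.symm (D' u)) - Aγ (AL.symm (L 0)) + γ 0),
      map_add AL, map_sub AL]
    rw [show AL (Aγ (AL.symm (D' u))) - AL (Aγ (AL.symm (L 0))) + AL (γ 0) + L 0
        = (AL (Aγ (AL.symm (D' u))) + (AL (γ 0) + L 0)) - AL (Aγ (AL.symm (L 0))) by abel]
    rw [hDsub, hDadd, hDadd]
    abel
  have hginj : Injective g := by
    intro u v h
    rw [hgdef] at h
    have h1 := hDfinj h
    have h2 := hLiso.injective h1
    have h3 := hγiso.injective h2
    have h4 := AL.symm.injective h3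
    have h5 : D' u = D' v := by
      have := congrArg (fun w => w + L 0) h4
      simpa using this
    rw [← hDD' u, h5, hDD']
  have hgcomm : ∀ u, g (Df (L u)) = Df (L (γ u)) := by
    intro u
    rw [hgdef]
    show Df (L (γ (AL.symm (D' (Df (L u)) - L 0)))) = _
    rw [hD'D, hALsymmL]
  have hgimg : g '' Cube n = Cube n := by
    have h2 : Df '' (L '' R) = Cube n := by
      rw [hLR, hDfdef, stretch_img n a ha, Icube_eq_Cube]
    rw [← h2, Set.image_image, Set.image_image]
    have h3 : (fun u => g (Df (L u))) '' R = (fun u => Df (L (γ u))) '' R :=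
      Set.image_congr fun u _ => hgcomm u
    rw [h3]
    have h4 : (fun u => Df (L (γ u))) '' R = Df '' (L '' (γ '' R)) := by
      rw [Set.image_image, Set.image_image]
    rw [h4, hγR, ← Set.image_image]
  -- g is a signed permutation
  obtain ⟨πg, δg, hδg, hgform⟩ := cubeAuto (lt_of_lt_of_le zero_lt_one hn) G t₀
    (by
      have : (fun u => G u + t₀) = g := funext fun u => (hgaff u).symm
      rw [this]; exact hginj)
    (by
      have : (fun u => G u + t₀) = g := funext fun u => (hgaff u).symm
      rw [this]; exact hgimg)
  -- the two points in H'
  set y : E n := Df (L x) with hydef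
  set z : E n := Df (L (γ x)) with hzdef
  have hyH' : y ∈ H' := by
    rw [hHeq] at hx
    exact hx
  have hzH' : z ∈ H' := by
    rw [hHeq] at hγx
    exact hγx
  have hzform : ∀ i, z i = δg i * y (πg i) := by
    intro i
    have h1 : z = g y := by rw [hydef, hzdef, hgcomm]
    rw [h1, hgaff, PiLp.add_apply, hgform]
  -- reduction of the goal to z = y
  have hfinal : z = y → γ x = x := by
    intro hzy
    have h1 : L (γ x) = L x := hDfinj hzy
    exact hLiso.injective h1
  apply hfinal
  -- face structure
  obtain ⟨c, e, hface, hKo⟩ := hH'cal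
  obtain ⟨J, hJ1, hJ2, hJcard, hceq⟩ := hface
  set F : Set (Fin n) := {i : Fin n | J i = Icc (-1:ℝ) 1} with hFdef
  rcases hKo with ⟨he0, hH'c⟩ | ⟨he1, M, hMconf, hMc, H'', hH''KoD, hH'eq⟩
  · -- dimension 0 face: c is a singleton
    have hFempty : F = ∅ := by
      rw [he0] at hJcard
      exact Set.ncard_eq_zero (Set.toFinite _) |>.mp hJcard
    have hyc : ∀ i, y i ∈ J i := by
      have : y ∈ c := by rw [← hH'c]; exact hyH'
      rw [hceq] at this; exact this
    have hzc : ∀ i, z i ∈ J i := by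
      have : z ∈ c := by rw [← hH'c]; exact hzH'
      rw [hceq] at this; exact this
    apply Eext; intro i
    have hsing : ∃ r : ℝ, J i = {r} := by
      rcases hJ1 i i.isLt with h | h | h
      · exfalso
        have : i ∈ F := h
        rw [hFempty] at this
        exact this
      · exact ⟨-1, h⟩
      · exact ⟨1, h⟩
    obtain ⟨r, hr⟩ := hsing
    have h1 := hyc i; have h2 := hzc i
    rw [hr, mem_singleton_iff] at h1 h2
    rw [h1, h2]
  · obtain ⟨cM, UM, vM, hcM, hMapp⟩ := hMconf
    obtain ⟨S, hSfund, hH''eq⟩ := hH''KoD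
    have he : 0 < e := he1
    have hMinj : Injective M := by
      intro u v h
      rw [hMapp, hMapp] at h
      have h1 : cM • UM u = cM • UM v := by
        have := congrArg (fun w => w - vM) h
        simpa using this
      have h2 : UM u = UM v := smul_right_injective _ (ne_of_gt hcM) h1
      exact UM.injective h2
    have hFcard : F.ncard = e := hJcard
    have he_le : e ≤ n := by
      rw [← hFcard]
      have h1 : F.ncard ≤ (Set.univ : Set (Fin n)).ncard :=
        Set.ncard_le_ncard (Set.subset_univ F) Set.finite_univ
      rwa [Set.ncard_univ, Nat.card_eq_fintype_card, Fintype.card_fin] at h1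
    haveI : Fintype F := Fintype.ofFinite _
    have hcardF : Fintype.card F = e := by
      have h1 := Set.ncard_eq_toFinset_card' F
      rw [Set.toFinset_card] at h1
      rw [← h1]; exact hFcard
    set ι : Fin e ≃ F := (Fintype.equivFinOfCardEq hcardF).symm with hιdef
    set m : Fin n → ℝ := fun i => if J i = ({1} : Set ℝ) then 1 else -1 with hmdef
    have hmval : ∀ i, m i = 1 ∨ m i = -1 := by
      intro i; rw [hmdef]; dsimp only; split_ifs
      exacts [Or.inl rfl, Or.inr rfl]
    have hmF : ∀ i, i ∈ F → J i = Icc (-1:ℝ) 1 := fun i h => h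
    have hm : ∀ i, i ∉ F → J i = {m i} := by
      intro i hiF
      rcases hJ1 i i.isLt with h | h | h
      · exact absurd h hiF
      · have hne : J i ≠ ({1} : Set ℝ) := by
          rw [h]; intro hc
          have h2 : (-1:ℝ) ∈ ({1} : Set ℝ) := hc ▸ (mem_singleton (-1:ℝ))
          rw [mem_singleton_iff] at h2; norm_num at h2
        rw [hmdef]; dsimp only; rw [if_neg hne]; exact h
      · rw [hmdef]; dsimp only; rw [if_pos h]; exact h
    set ψ : E e → E n := fun w => WithLp.toLp 2 (fun i => if h : i ∈ F then w (ι.symm ⟨i, h⟩) else m i) with hψdef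
    set ψ₀ : E e → E n := fun w => WithLp.toLp 2 (fun i => if h : i ∈ F then w (ι.symm ⟨i, h⟩) else 0) with hψ₀def
    set mv : E n := WithLp.toLp 2 (fun i => if i ∈ F then 0 else m i) with hmvdef
    have hψapp : ∀ w i, ψ w i = if h : i ∈ F then w (ι.symm ⟨i, h⟩) else m i := fun w i => rfl
    have hψ₀app : ∀ w i, ψ₀ w i = if h : i ∈ F then w (ι.symm ⟨i, h⟩) else 0 := fun w i => rfl
    have hmvapp : ∀ i, mv i = if i ∈ F then 0 else m i := fun i => rfl
    have hψsplit : ∀ w, ψ w = ψ₀ w + mv := by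
      intro w; apply Eext; intro i
      rw [PiLp.add_apply, hψapp, hψ₀app, hmvapp]
      by_cases h : i ∈ F
      · rw [dif_pos h, dif_pos h, if_pos h, add_zero]
      · rw [dif_neg h, dif_neg h, if_neg h, zero_add]
    have hψ₀add : ∀ w w', ψ₀ (w + w') = ψ₀ w + ψ₀ w' := by
      intro w w'; apply Eext; intro i
      rw [PiLp.add_apply, hψ₀app, hψ₀app, hψ₀app]
      by_cases h : i ∈ F
      · rw [dif_pos h, dif_pos h, dif_pos h, PiLp.add_apply]
      · rw [dif_neg h, dif_neg h, dif_neg h, add_zero]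
    have hψ₀smul : ∀ (r : ℝ) w, ψ₀ (r • w) = r • ψ₀ w := by
      intro r w; apply Eext; intro i
      rw [PiLp.smul_apply, hψ₀app, hψ₀app]
      by_cases h : i ∈ F
      · rw [dif_pos h, dif_pos h, PiLp.smul_apply]
      · rw [dif_neg h, dif_neg h, smul_eq_mul, mul_zero]
    obtain ⟨wOf, hwOfapp⟩ : ∃ wf : E n → E e, ∀ (u : E n) (k : Fin e), wf u k = u ((ι k : F) : Fin n) :=
      ⟨fun (u : E n) => WithLp.toLp 2 (fun (k : Fin e) => u ((ι k : F) : Fin n)), fun u k => rfl⟩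
    have hcmem : ∀ u : E n, u ∈ c ↔ ∀ i, u i ∈ J i := by
      intro u; rw [hceq]; exact Iff.rfl
    have hψw_mem : ∀ w ∈ Cube e, ψ w ∈ c := by
      intro w hw
      rw [hcmem]; intro i
      rw [hψapp]
      by_cases h : i ∈ F
      · rw [dif_pos h, hmF i h, mem_Icc, ← abs_le]
        exact hw _
      · rw [dif_neg h, hm i h]
        exact rfl
    have hψwOf : ∀ u, u ∈ c → ψ (wOf u) = u := by
      intro u hu; apply Eext; intro i
      rw [hψapp]
      by_cases h : i ∈ F
      · rw [dif_pos h, hwOfapp, Equiv.apply_symm_apply]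
      · rw [dif_neg h]
        have h2 := (hcmem u).mp hu i
        rw [hm i h, mem_singleton_iff] at h2
        exact h2.symm
    have hwOfcube : ∀ u, u ∈ c → wOf u ∈ Cube e := by
      intro u hu k
      rw [hwOfapp]
      have h2 := (hcmem u).mp hu (ι k)
      rw [hmF _ (ι k).2, mem_Icc] at h2
      exact abs_le.2 h2
    have hTsub : ∀ T ∈ S, T ⊆ IcubeD n e := by
      intro T hT
      obtain ⟨i, j, _, _, aa, bb, _, _, rfl⟩ := hSfund.1 hT
      exact sep_subset _ _
    have hSne : S.Nonempty := by
      have h0e : ((⟨0, lt_of_lt_of_le Nat.zero_lt_one hn⟩ : Fin n) : ℕ) < e := he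
      rcases (hSfund.2 _ _ h0e h0e (le_refl _)).1 with h | h
      exacts [⟨_, h⟩, ⟨_, h⟩]
    have hsubc : H' ⊆ c := by
      intro u hu
      rw [hH'eq, mem_preimage, hH''eq] at hu
      obtain ⟨T, hT⟩ := hSne
      have h1 : M u ∈ IcubeD n e := hTsub T hT (Set.mem_sInter.mp hu T hT)
      rw [← hMc] at h1
      obtain ⟨u', hu'c, hu'⟩ := h1
      rw [← hMinj hu']
      exact hu'c
    have hyc : y ∈ c := hsubc hyH'
    have hzc : z ∈ c := hsubc hzH'
    have hyI : M y ∈ ⋂₀ S := by rw [hH'eq, mem_preimage, hH''eq] at hyH'; exact hyH'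
    have hzI : M z ∈ ⋂₀ S := by rw [hH'eq, mem_preimage, hH''eq] at hzH'; exact hzH'
    -- the induced affine map on the e-dimensional cube
    obtain ⟨emb, hembval⟩ : ∃ f : Fin e → Fin n, ∀ k : Fin e, (f k : ℕ) = (k : ℕ) :=
      ⟨fun k => ⟨(k : ℕ), lt_of_lt_of_le k.isLt he_le⟩, fun k => rfl⟩
    have hembe : ∀ k : Fin e, ((emb k : Fin n) : ℕ) < e := by
      intro k; rw [hembval]; exact k.isLt
    obtain ⟨Nf, hNfapp⟩ : ∃ Nf : E e → E e, ∀ (w : E e) (k : Fin e), Nf w k = M (ψ w) (emb k) :=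
      ⟨fun w => WithLp.toLp 2 (fun k => M (ψ w) (emb k)), fun w k => rfl⟩
    have hMψ : ∀ (w : E e) (i : Fin n),
        M (ψ w) i = cM * (UM (ψ₀ w)) i + (cM * (UM mv) i + vM i) := by
      intro w i
      rw [hMapp, hψsplit, PiLp.add_apply, PiLp.smul_apply, smul_eq_mul, map_add,
        PiLp.add_apply]
      ring
    have hvanish : ∀ (w : E e) (i : Fin n), e ≤ (i : ℕ) → M (ψ w) i = 0 := by
      intro w i hi
      have hsm : ∀ (r : ℝ) (w' : E e),
          (fun w'' => cM * (UM (ψ₀ w'')) i) (r • w') = r * (fun w'' => cM * (UM (ψ₀ w'')) i) w' := by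
        intro r w'
        dsimp only
        rw [hψ₀smul, map_smul, PiLp.smul_apply, smul_eq_mul]
        ring
      have hmem0 : ∀ w' ∈ Cube e,
          (fun w'' => cM * (UM (ψ₀ w'')) i) w' + (cM * (UM mv) i + vM i) = 0 := by
        intro w' hw'
        have h1 : M (ψ w') ∈ IcubeD n e := by rw [← hMc]; exact ⟨ψ w', hψw_mem w' hw', rfl⟩
        have h2 := h1.2 i hi
        rw [hMψ] at h2
        dsimp only
        linarith [h2]
      have hvan := lin_vanish he (fun w'' => cM * (UM (ψ₀ w'')) i)
        (cM * (UM mv) i + vM i) hsm hmem0 w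
      dsimp only at hvan
      rw [hMψ]
      linarith [hvan]
    have hNinj : Injective Nf := by
      intro w w' h
      have h1 : M (ψ w) = M (ψ w') := by
        apply Eext; intro i
        by_cases hi : (i : ℕ) < e
        · have h2 : emb ⟨(i : ℕ), hi⟩ = i := Fin.ext (hembval _)
          have h3 : Nf w ⟨(i : ℕ), hi⟩ = Nf w' ⟨(i : ℕ), hi⟩ := by rw [h]
          rw [hNfapp, hNfapp, h2] at h3
          exact h3
        · rw [hvanish w i (not_lt.1 hi), hvanish w' i (not_lt.1 hi)]
      have h2 : ψ w = ψ w' := hMinj h1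
      apply Eext; intro k
      have h3 : ψ w ((ι k : F) : Fin n) = ψ w' ((ι k : F) : Fin n) := by rw [h2]
      rw [hψapp, hψapp, dif_pos (ι k).2, dif_pos (ι k).2] at h3
      have h4 : (⟨((ι k : F) : Fin n), (ι k).2⟩ : F) = ι k := Subtype.coe_eta _ _
      rw [h4, Equiv.symm_apply_apply] at h3
      exact h3
    have hNimg : Nf '' Cube e = Cube e := by
      apply Set.Subset.antisymm
      · rintro u ⟨w, hw, rfl⟩ k
        have h1 : M (ψ w) ∈ IcubeD n e := by rw [← hMc]; exact ⟨ψ w, hψw_mem w hw, rfl⟩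
        have h2 := h1.1 (emb k) (hembe k)
        rw [mem_Icc] at h2
        rw [hNfapp]
        exact abs_le.2 h2
      · intro u hu
        obtain ⟨xx, hxxapp⟩ : ∃ xx : E n, ∀ i : Fin n,
            xx i = if h : (i : ℕ) < e then u ⟨(i : ℕ), h⟩ else 0 :=
          ⟨WithLp.toLp 2 (fun i => if h : (i : ℕ) < e then u ⟨(i : ℕ), h⟩ else 0), fun i => rfl⟩
        have hxxI : xx ∈ IcubeD n e := by
          constructor
          · intro i hi
            rw [hxxapp, dif_pos hi, mem_Icc]
            exact abs_le.1 (hu _)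
          · intro i hi
            rw [hxxapp, dif_neg (not_lt.2 hi)]
        rw [← hMc] at hxxI
        obtain ⟨p, hpc, hpx⟩ := hxxI
        refine ⟨wOf p, hwOfcube p hpc, ?_⟩
        apply Eext; intro k
        rw [hNfapp, hψwOf p hpc, hpx, hxxapp, dif_pos (hembe k)]
        have h5 : (⟨((emb k : Fin n) : ℕ), hembe k⟩ : Fin e) = k := Fin.ext (hembval k)
        rw [h5]
    set NA : E e →ₗ[ℝ] E e :=
      { toFun := fun w => WithLp.toLp 2 (fun k => cM * (UM (ψ₀ w)) (emb k))
        map_add' := by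
          intro w w'
          apply Eext; intro k
          rw [PiLp.add_apply]
          show cM * (UM (ψ₀ (w + w'))) (emb k)
            = cM * (UM (ψ₀ w)) (emb k) + cM * (UM (ψ₀ w')) (emb k)
          rw [hψ₀add, map_add, PiLp.add_apply]
          ring
        map_smul' := by
          intro r w
          apply Eext; intro k
          rw [RingHom.id_apply, PiLp.smul_apply]
          show cM * (UM (ψ₀ (r • w))) (emb k) = r • (cM * (UM (ψ₀ w)) (emb k))
          rw [hψ₀smul, map_smul, PiLp.smul_apply, smul_eq_mul, smul_eq_mul]
          ring } with hNAdef
    have hNAapp : ∀ w k, NA w k = cM * (UM (ψ₀ w)) (emb k) := fun w k => rfl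
    set Nt : E e := WithLp.toLp 2 (fun k => cM * (UM mv) (emb k) + vM (emb k)) with hNtdef
    have hNtapp : ∀ k, Nt k = cM * (UM mv) (emb k) + vM (emb k) := fun k => rfl
    have hNdecomp : ∀ w k, Nf w k = NA w k + Nt k := by
      intro w k; rw [hNfapp, hMψ, hNAapp, hNtapp]
    have hNfun : (fun w => NA w + Nt) = Nf :=
      funext fun w => Eext fun k => by rw [PiLp.add_apply, ← hNdecomp]
    obtain ⟨πN, δN, hδN, hNform⟩ := cubeAuto he NA Nt
      (by rw [hNfun]; exact hNinj) (by rw [hNfun]; exact hNimg)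
    have hNval : ∀ w k, Nf w k = δN k * w (πN k) := by
      intro w k; rw [hNdecomp, hNform]
    -- coordinates of the images of y and z
    obtain ⟨p, hpdef⟩ : ∃ p : Fin e → ℝ, ∀ k, p k = M y (emb k) := ⟨_, fun _ => rfl⟩
    obtain ⟨q, hqdef⟩ : ∃ q : Fin e → ℝ, ∀ k, q k = M z (emb k) := ⟨_, fun _ => rfl⟩
    have hpval : ∀ k, p k = δN k * y ((ι (πN k) : F) : Fin n) := by
      intro k
      conv_lhs => rw [hpdef, ← hψwOf y hyc, ← hNfapp, hNval, hwOfapp]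
    have hqval : ∀ k, q k = δN k * z ((ι (πN k) : F) : Fin n) := by
      intro k
      conv_lhs => rw [hqdef, ← hψwOf z hzc, ← hNfapp, hNval, hwOfapp]
    have hmemS : ∀ (i j : Fin n) (aa bb : ℝ), HsetD n e i j aa bb ∈ S →
        bb * M y j ≤ aa * M y i ∧ bb * M z j ≤ aa * M z i := by
      intro i j aa bb hT
      have h1 := Set.mem_sInter.mp hyI _ hT
      have h2 := Set.mem_sInter.mp hzI _ hT
      simp only [HsetD, Set.mem_sep_iff] at h1 h2
      exact ⟨h1.2, h2.2⟩
    have hdiag : ∀ k : Fin e, ∃ s : ℝ, (s = 1 ∨ s = -1) ∧ 0 ≤ s * p k ∧ 0 ≤ s * q k := by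
      intro k
      rcases (hSfund.2 (emb k) (emb k) (hembe k) (hembe k) (le_refl _)).1 with hT | hT
      · obtain ⟨h1, h2⟩ := hmemS _ _ _ _ hT
        refine ⟨1, Or.inl rfl, ?_, ?_⟩
        · rw [one_mul, hpdef]; linarith
        · rw [one_mul, hqdef]; linarith
      · obtain ⟨h1, h2⟩ := hmemS _ _ _ _ hT
        refine ⟨-1, Or.inr rfl, ?_, ?_⟩
        · rw [neg_one_mul, hpdef]; linarith
        · rw [neg_one_mul, hqdef]; linarith
    choose sfn hsfn1 hsfn2 hsfn3 using hdiag
    have hsum : ∀ k l : Fin e, k ≤ l →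
        (0 ≤ p k + p l ∧ 0 ≤ q k + q l) ∨ (p k + p l ≤ 0 ∧ q k + q l ≤ 0) := by
      intro k l hkl
      have hle : emb k ≤ emb l := by
        rw [Fin.le_def, hembval, hembval]
        exact hkl
      rcases (hSfund.2 (emb k) (emb l) (hembe k) (hembe l) hle).1 with hT | hT
      · obtain ⟨h1, h2⟩ := hmemS _ _ _ _ hT
        left
        rw [hpdef, hpdef, hqdef, hqdef]
        constructor <;> linarith
      · obtain ⟨h1, h2⟩ := hmemS _ _ _ _ hT
        right
        rw [hpdef, hpdef, hqdef, hqdef]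
        constructor <;> linarith
    have hdiff : ∀ k l : Fin e, k ≤ l →
        (p l ≤ p k ∧ q l ≤ q k) ∨ (p k ≤ p l ∧ q k ≤ q l) := by
      intro k l hkl
      have hle : emb k ≤ emb l := by
        rw [Fin.le_def, hembval, hembval]
        exact hkl
      rcases (hSfund.2 (emb k) (emb l) (hembe k) (hembe l) hle).2 with hT | hT
      · obtain ⟨h1, h2⟩ := hmemS _ _ _ _ hT
        left
        rw [hpdef, hpdef, hqdef, hqdef]
        constructor <;> linarith
      · obtain ⟨h1, h2⟩ := hmemS _ _ _ _ hT
        right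
        rw [hpdef, hpdef, hqdef, hqdef]
        constructor <;> linarith
    have hco_pq : ∀ k l : Fin e, 0 ≤ (|p k| - |p l|) * (|q k| - |q l|) := by
      intro k l
      rcases le_total k l with h | h
      · exact pair_rigid (p k) (p l) (q k) (q l) (sfn k) (sfn l) (hsfn1 k) (hsfn1 l)
          (hsfn2 k) (hsfn3 k) (hsfn2 l) (hsfn3 l) (hsum k l h) (hdiff k l h)
      · have h2 := pair_rigid (p l) (p k) (q l) (q k) (sfn l) (sfn k) (hsfn1 l) (hsfn1 k)
          (hsfn2 l) (hsfn3 l) (hsfn2 k) (hsfn3 k) (hsum l k h) (hdiff l k h)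
        have heq : (|p k| - |p l|) * (|q k| - |q l|) = (|p l| - |p k|) * (|q l| - |q k|) := by
          ring
        rw [heq]
        exact h2
    obtain ⟨U, hUdef⟩ : ∃ U : Fin n → ℝ, ∀ i, U i = |y i| := ⟨_, fun _ => rfl⟩
    obtain ⟨V, hVdef⟩ : ∃ V : Fin n → ℝ, ∀ i, V i = |z i| := ⟨_, fun _ => rfl⟩
    have hδg1 : ∀ i, |δg i| = 1 := by
      intro i; rcases hδg i with h | h <;> rw [h] <;> norm_num
    have hVU : ∀ i, V i = U (πg i) := by
      intro i; rw [hVdef, hUdef, hzform, abs_mul, hδg1, one_mul]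
    have hbound : ∀ i : Fin n, |y i| ≤ 1 ∧ |z i| ≤ 1 := by
      intro i
      have h1 := (hcmem y).mp hyc i
      have h2 := (hcmem z).mp hzc i
      rcases hJ1 i i.isLt with h | h | h <;> rw [h] at h1 h2
      · rw [mem_Icc] at h1 h2; exact ⟨abs_le.2 h1, abs_le.2 h2⟩
      · rw [mem_singleton_iff] at h1 h2; rw [h1, h2]; norm_num
      · rw [mem_singleton_iff] at h1 h2; rw [h1, h2]; norm_num
    have hoffF : ∀ i, i ∉ F → z i = y i := by
      intro i h
      have h1 := (hcmem y).mp hyc i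
      have h2 := (hcmem z).mp hzc i
      rw [hm i h, mem_singleton_iff] at h1 h2
      rw [h1, h2]
    have hδN1 : ∀ k, |δN k| = 1 := by
      intro k; rcases hδN k with h | h <;> rw [h] <;> norm_num
    have hUp : ∀ k : Fin e, |p k| = U ((ι (πN k) : F) : Fin n) := by
      intro k; rw [hpval, abs_mul, hδN1, one_mul, hUdef]
    have hVq : ∀ k : Fin e, |q k| = V ((ι (πN k) : F) : Fin n) := by
      intro k; rw [hqval, abs_mul, hδN1, one_mul, hVdef]
    have hmone : ∀ j, j ∉ F → U j = 1 ∧ V j = 1 := by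
      intro j hjF
      have h1 := (hcmem y).mp hyc j
      have h2 := (hcmem z).mp hzc j
      rw [hm j hjF, mem_singleton_iff] at h1 h2
      have h3 : |m j| = 1 := by rcases hmval j with h | h <;> rw [h] <;> norm_num
      rw [hUdef, hVdef, h1, h2]
      exact ⟨h3, h3⟩
    have hco_UV : ∀ i j : Fin n, 0 ≤ (U i - U j) * (V i - V j) := by
      intro i j
      by_cases hiF : i ∈ F <;> by_cases hjF : j ∈ F
      · set k := πN.symm (ι.symm ⟨i, hiF⟩) with hkdef
        set l := πN.symm (ι.symm ⟨j, hjF⟩) with hldef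
        have hk : ((ι (πN k) : F) : Fin n) = i := by
          rw [hkdef, Equiv.apply_symm_apply, Equiv.apply_symm_apply]
        have hl : ((ι (πN l) : F) : Fin n) = j := by
          rw [hldef, Equiv.apply_symm_apply, Equiv.apply_symm_apply]
        have h1 := hco_pq k l
        rw [hUp, hVq, hUp, hVq, hk, hl] at h1
        exact h1
      · obtain ⟨h1, h2⟩ := hmone j hjF
        rw [h1, h2]
        have h3 : U i ≤ 1 := by rw [hUdef]; exact (hbound i).1
        have h4 : V i ≤ 1 := by rw [hVdef]; exact (hbound i).2
        nlinarith
      · obtain ⟨h1, h2⟩ := hmone i hiF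
        rw [h1, h2]
        have h3 : U j ≤ 1 := by rw [hUdef]; exact (hbound j).1
        have h4 : V j ≤ 1 := by rw [hVdef]; exact (hbound j).2
        nlinarith
      · have h1 : V i = U i := by rw [hUdef, hVdef, hoffF i hiF]
        have h2 : V j = U j := by rw [hUdef, hVdef, hoffF j hjF]
        rw [h1, h2]
        exact mul_self_nonneg _
    have habs := comono_eq U V πg hVU hco_UV
    -- conclude z = y
    apply Eext; intro i
    by_cases hiF : i ∈ F
    · set k := πN.symm (ι.symm ⟨i, hiF⟩) with hkdef
      have hk : ((ι (πN k) : F) : Fin n) = i := by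
        rw [hkdef, Equiv.apply_symm_apply, Equiv.apply_symm_apply]
      have hp1 : p k = δN k * y i := by rw [hpval, hk]
      have hq1 : q k = δN k * z i := by rw [hqval, hk]
      have hσ : sfn k * δN k = 1 ∨ sfn k * δN k = -1 := by
        rcases hsfn1 k with h | h <;> rcases hδN k with h' | h' <;> rw [h, h'] <;> norm_num
      apply sign_eq (sfn k * δN k) (z i) (y i) hσ
      · rw [mul_assoc]
        have h5 := hsfn3 k
        rw [hq1] at h5
        exact h5
      · rw [mul_assoc]
        have h5 := hsfn2 k
        rw [hp1] at h5
        exact h5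
      · exact (hVdef i).symm.trans ((habs i).trans (hUdef i))
    · exact hoffF i hiF
end
end
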